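/- arXiv:0810.5217 — 5 statements merged into one kernel-verified Lean document; each statement's English description precedes it below -/
import Mathlib

section
/- Let 𝔐 = ⟨⟨θ_α : α ≤ κ⟩, ⟨𝔉_{αβ} : α < β ≤ κ⟩⟩ be a simplified (κ,1)-morass. If α < β ≤ κ, τ₁, τ₂ < θ_α, f₁, f₂ ∈ 𝔉_{αβ}, and f₁(τ₁) = f₂(τ₂), then τ₁ = τ₂ and f₁ ↾ τ₁ = f₂ ↾ τ₂. -/
open Ordinal Set

/-- A simplified `(κ,1)`-morass (Velleman).  Morass maps are coded as total
functions `Ordinal → Ordinal`, constrained only on `Iio (θ α)`. -/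
structure SimplifiedMorass (κ : Cardinal.{0}) where
  θ : Ordinal → Ordinal
  F : Ordinal → Ordinal → Set (Ordinal → Ordinal)
  fa : Ordinal → Ordinal → Ordinal
  theta_zero : θ 0 = 1
  theta_top : θ κ.ord = (Order.succ κ).ord
  theta_pos : ∀ α < κ.ord, 0 < θ α
  theta_lt : ∀ α < κ.ord, θ α < κ.ord
  F_mono : ∀ α β, ∀ f ∈ F α β, StrictMonoOn f (Set.Iio (θ α))
  F_maps : ∀ α β, ∀ f ∈ F α β, ∀ ξ < θ α, f ξ < θ β
  P1 : ∀ α β, α < β → β < κ.ord → Cardinal.mk ↥(F α β) < Cardinal.lift.{1} κ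
  P2a : ∀ α β γ, α < β → β < γ → γ ≤ κ.ord →
    ∀ h ∈ F α γ, ∃ f ∈ F β γ, ∃ g ∈ F α β, ∀ ξ < θ α, h ξ = f (g ξ)
  P2b : ∀ α β γ, α < β → β < γ → γ ≤ κ.ord →
    ∀ f ∈ F β γ, ∀ g ∈ F α β, ∃ h ∈ F α γ, ∀ ξ < θ α, h ξ = f (g ξ)
  P3a : ∀ α < κ.ord, fa α ∈ F α (α + 1)
  P3b : ∀ α < κ.ord, ∃ δ < θ α, (∀ ξ < δ, fa α ξ = ξ) ∧ θ α ≤ fa α δ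
  P3c : ∀ α < κ.ord, ∃ g ∈ F α (α + 1), ∀ ξ < θ α, g ξ = ξ
  P3d : ∀ α < κ.ord, ∀ g ∈ F α (α + 1),
    (∀ ξ < θ α, g ξ = ξ) ∨ (∀ ξ < θ α, g ξ = fa α ξ)
  P4 : ∀ α ≤ κ.ord, Order.IsSuccLimit α → ∀ β₁ β₂, β₁ < α → β₂ < α →
    ∀ f₁ ∈ F β₁ α, ∀ f₂ ∈ F β₂ α, ∃ γ, β₁ < γ ∧ β₂ < γ ∧ γ < α ∧
      ∃ g ∈ F γ α, ∃ h₁ ∈ F β₁ γ, ∃ h₂ ∈ F β₂ γ,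
        (∀ ξ < θ β₁, f₁ ξ = g (h₁ ξ)) ∧ (∀ ξ < θ β₂, f₂ ξ = g (h₂ ξ))
  P5 : ∀ α ≤ κ.ord, 0 < α → ∀ τ < θ α, ∃ β < α, ∃ f ∈ F β α, ∃ ξ < θ β, f ξ = τ

/-- The tree relation `s ≺ t` on the morass tree
`T = {⟨α,ν⟩ : α ≤ κ, ν < θ_α}`. -/
def Prec {κ : Cardinal} (M : SimplifiedMorass κ) (s t : Ordinal × Ordinal) : Prop :=
  s.1 < t.1 ∧ t.1 ≤ κ.ord ∧ s.2 < M.θ s.1 ∧ t.2 < M.θ t.1 ∧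
    ∃ f ∈ M.F s.1 t.1, f s.2 = t.2

namespace SimplifiedMorass
section
variable {κ : Cardinal} (M : SimplifiedMorass κ)

lemma succ_coh {γ : Ordinal} (hγ : γ < κ.ord) {σ₁ σ₂ : Ordinal}
    (hσ₁ : σ₁ < M.θ γ) (hσ₂ : σ₂ < M.θ γ) {h₁ h₂ : Ordinal → Ordinal}
    (hh₁ : h₁ ∈ M.F γ (γ+1)) (hh₂ : h₂ ∈ M.F γ (γ+1))
    (heq : h₁ σ₁ = h₂ σ₂) : σ₁ = σ₂ ∧ ∀ ξ < σ₁, h₁ ξ = h₂ ξ := by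
  have famono := M.F_mono γ (γ+1) _ (M.P3a γ hγ)
  obtain ⟨δ, hδ, hid, hbig⟩ := M.P3b γ hγ
  have key : ∀ g₁ g₂ : Ordinal → Ordinal, g₁ ∈ M.F γ (γ+1) → g₂ ∈ M.F γ (γ+1) →
      (∀ ξ < M.θ γ, g₁ ξ = ξ) → (∀ ξ < M.θ γ, g₂ ξ = M.fa γ ξ) →
      ∀ σ₁ σ₂, σ₁ < M.θ γ → σ₂ < M.θ γ → g₁ σ₁ = g₂ σ₂ →
      σ₁ = σ₂ ∧ ∀ ξ < σ₁, g₁ ξ = g₂ ξ := by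
    intro g₁ g₂ _ _ e₁ e₂ σ₁ σ₂ hσ₁ hσ₂ heq
    rw [e₁ σ₁ hσ₁, e₂ σ₂ hσ₂] at heq
    rcases lt_or_ge σ₂ δ with h | h
    · have : σ₁ = σ₂ := by rw [heq, hid σ₂ h]
      subst this
      refine ⟨rfl, fun ξ hξ => ?_⟩
      have hξθ : ξ < M.θ γ := hξ.trans hσ₁
      rw [e₁ ξ hξθ, e₂ ξ hξθ, hid ξ (hξ.trans h)]
    · exfalso
      have : M.fa γ δ ≤ M.fa γ σ₂ := famono.monotoneOn hδ hσ₂ h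
      exact absurd (heq ▸ hσ₁) (not_lt.2 (hbig.trans this))
  rcases M.P3d γ hγ h₁ hh₁ with e₁ | e₁ <;> rcases M.P3d γ hγ h₂ hh₂ with e₂ | e₂
  · refine ⟨by rw [← e₁ σ₁ hσ₁, heq, e₂ σ₂ hσ₂], fun ξ hξ => ?_⟩
    have hξθ := hξ.trans hσ₁
    rw [e₁ ξ hξθ, e₂ ξ hξθ]
  · exact key h₁ h₂ hh₁ hh₂ e₁ e₂ σ₁ σ₂ hσ₁ hσ₂ heq
  · obtain ⟨h, h'⟩ := key h₂ h₁ hh₂ hh₁ e₂ e₁ σ₂ σ₁ hσ₂ hσ₁ heq.symm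
    exact ⟨h.symm, fun ξ hξ => (h' ξ (h ▸ hξ)).symm⟩
  · rw [e₁ σ₁ hσ₁, e₂ σ₂ hσ₂] at heq
    have : σ₁ = σ₂ := famono.injOn hσ₁ hσ₂ heq
    subst this
    refine ⟨rfl, fun ξ hξ => ?_⟩
    have hξθ := hξ.trans hσ₁
    rw [e₁ ξ hξθ, e₂ ξ hξθ]

lemma main_coh : ∀ β α, α < β → β ≤ κ.ord → ∀ τ₁ < M.θ α, ∀ τ₂ < M.θ α,
    ∀ f₁ ∈ M.F α β, ∀ f₂ ∈ M.F α β, f₁ τ₁ = f₂ τ₂ →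
    τ₁ = τ₂ ∧ ∀ ξ < τ₁, f₁ ξ = f₂ ξ := by
  intro β
  induction β using Ordinal.induction with
  | h β IH =>
  intro α hαβ hβ τ₁ hτ₁ τ₂ hτ₂ f₁ hf₁ f₂ hf₂ heq
  rcases Ordinal.zero_or_succ_or_isSuccLimit β with rfl | ⟨γ, rfl⟩ | hlim
  · exact absurd hαβ (not_lt_zero (a := α))
  · rw [← Ordinal.add_one_eq_succ] at *
    have hγκ : γ < κ.ord := lt_of_lt_of_le (lt_add_one γ) hβ
    rcases eq_or_lt_of_le (Order.lt_add_one_iff.mp hαβ) with rfl | hαγ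
    · exact M.succ_coh hγκ hτ₁ hτ₂ hf₁ hf₂ heq
    · obtain ⟨h₁, hh₁, g₁, hg₁, e₁⟩ := M.P2a α γ (γ+1) hαγ (lt_add_one γ) hβ f₁ hf₁
      obtain ⟨h₂, hh₂, g₂, hg₂, e₂⟩ := M.P2a α γ (γ+1) hαγ (lt_add_one γ) hβ f₂ hf₂
      have hg₁τ : g₁ τ₁ < M.θ γ := M.F_maps α γ g₁ hg₁ τ₁ hτ₁
      have hg₂τ : g₂ τ₂ < M.θ γ := M.F_maps α γ g₂ hg₂ τ₂ hτ₂
      rw [e₁ τ₁ hτ₁, e₂ τ₂ hτ₂] at heq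
      obtain ⟨he, hres⟩ := M.succ_coh hγκ hg₁τ hg₂τ hh₁ hh₂ heq
      obtain ⟨hτ, hres'⟩ := IH γ (lt_add_one γ) α hαγ hγκ.le τ₁ hτ₁ τ₂ hτ₂ g₁ hg₁ g₂ hg₂ he
      subst hτ
      refine ⟨rfl, fun ξ hξ => ?_⟩
      have hξθ := hξ.trans hτ₁
      have hg₁ξ : g₁ ξ < g₁ τ₁ := M.F_mono α γ g₁ hg₁ hξθ hτ₁ hξ
      rw [e₁ ξ hξθ, e₂ ξ hξθ, ← hres' ξ hξ, hres (g₁ ξ) hg₁ξ]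
  · obtain ⟨γ, hαγ, -, hγβ, g, hg, h₁, hh₁, h₂, hh₂, e₁, e₂⟩ :=
      M.P4 β hβ hlim α α hαβ hαβ f₁ hf₁ f₂ hf₂
    have hh₁τ : h₁ τ₁ < M.θ γ := M.F_maps α γ h₁ hh₁ τ₁ hτ₁
    have hh₂τ : h₂ τ₂ < M.θ γ := M.F_maps α γ h₂ hh₂ τ₂ hτ₂
    rw [e₁ τ₁ hτ₁, e₂ τ₂ hτ₂] at heq
    have he : h₁ τ₁ = h₂ τ₂ := (M.F_mono γ β g hg).injOn hh₁τ hh₂τ heq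
    obtain ⟨hτ, hres⟩ := IH γ hγβ α hαγ (hγβ.le.trans hβ) τ₁ hτ₁ τ₂ hτ₂ h₁ hh₁ h₂ hh₂ he
    subst hτ
    refine ⟨rfl, fun ξ hξ => ?_⟩
    have hξθ := hξ.trans hτ₁
    rw [e₁ ξ hξθ, e₂ ξ hξθ, hres ξ hξ]

end
end SimplifiedMorass

/-- Lemma 3.1 (coherence): if `f₁, f₂ ∈ 𝔉_{αβ}` and `f₁(τ₁) = f₂(τ₂)` then
`τ₁ = τ₂` and `f₁ ↾ τ₁ = f₂ ↾ τ₂`. -/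
theorem morass_coherence {κ : Cardinal} (M : SimplifiedMorass κ)
    {α β : Ordinal} (hαβ : α < β) (hβ : β ≤ κ.ord)
    {τ₁ τ₂ : Ordinal} (hτ₁ : τ₁ < M.θ α) (hτ₂ : τ₂ < M.θ α)
    {f₁ f₂ : Ordinal → Ordinal} (hf₁ : f₁ ∈ M.F α β) (hf₂ : f₂ ∈ M.F α β)
    (heq : f₁ τ₁ = f₂ τ₂) :
    τ₁ = τ₂ ∧ ∀ ξ < τ₁, f₁ ξ = f₂ ξ := by
  exact M.main_coh β α hαβ hβ τ₁ hτ₁ τ₂ hτ₂ f₁ hf₁ f₂ hf₂ heq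
end

section
/- Let 𝔐 be a simplified (κ,1)-morass and let ⟨⟨ℙ_η : η ≤ κ⁺⟩, ⟨σ_{st} : s ≺ t⟩, ⟨e_α : α < κ⟩⟩ be an FS system along 𝔐. For any p ∈ ℙ_{κ⁺}, the sequence ⟨γ_n(p) : n ∈ ω⟩ defined in the recursive computation of p* is strictly decreasing as long as it is defined; consequently γ_n(p) = 0 for some n ∈ ω, and the support supp(p) = {γ_n(p) : n ∈ ω} is finite. -/
open Ordinal Set

/-- An FS system `⟨⟨ℙ_η : η ≤ κ⁺⟩, ⟨σ_{st} : s ≺ t⟩, ⟨e_α : α < κ⟩⟩` along a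
simplified `(κ,1)`-morass `M` (Irrgang).  The partial orders `ℙ_η` are coded as
subsets `lev η` of a common ambient partial order `P` (so that
`ℙ_η ⊆_⊥ ℙ_ν` is meaningful), with `ℙ := ℙ_{κ⁺} = lev (θ κ)`. -/
structure FSSystem (κ : Cardinal.{0}) (M : SimplifiedMorass κ) (P : Type)
    [PartialOrder P] where
  lev : Ordinal → Set P
  sig : Ordinal × Ordinal → Ordinal × Ordinal → P → P
  e : Ordinal → P → P
  -- (FS1)
  lev_mono : ∀ {η ν : Ordinal}, η ≤ ν → lev η ⊆ lev ν
  lev_bot : ∀ {η ν : Ordinal}, η ≤ ν → ∀ p ∈ lev η, ∀ q ∈ lev η,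
      (∃ r ∈ lev ν, r ≤ p ∧ r ≤ q) → ∃ r ∈ lev η, r ≤ p ∧ r ≤ q
  lev_limit : ∀ {lam : Ordinal}, Order.IsSuccLimit lam → ∀ p ∈ lev lam, ∃ η < lam, p ∈ lev η
  -- (FS2)
  sig_maps : ∀ {s t}, Prec M s t →
      Set.MapsTo (sig s t) (lev (s.2 + 1)) (lev (t.2 + 1))
  sig_mono : ∀ {s t}, Prec M s t → ∀ p ∈ lev (s.2 + 1), ∀ q ∈ lev (s.2 + 1),
      q ≤ p → sig s t q ≤ sig s t p
  sig_incomp : ∀ {s t}, Prec M s t → ∀ p ∈ lev (s.2 + 1), ∀ q ∈ lev (s.2 + 1),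
      ((∃ r ∈ lev (s.2 + 1), r ≤ p ∧ r ≤ q) ↔
        (∃ r ∈ lev (t.2 + 1), r ≤ sig s t p ∧ r ≤ sig s t q))
  sig_inj : ∀ {s t}, Prec M s t → Set.InjOn (sig s t) (lev (s.2 + 1))
  sig_comm : ∀ {s t u}, Prec M s t → Prec M t u → ∀ p ∈ lev (s.2 + 1),
      sig t u (sig s t p) = sig s u p
  sig_limit : ∀ {t : Ordinal × Ordinal}, Order.IsSuccLimit t.1 → t.1 ≤ κ.ord →
      t.2 < M.θ t.1 → ∀ p ∈ lev (t.2 + 1),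
      ∃ s, Prec M s t ∧ ∃ q ∈ lev (s.2 + 1), sig s t q = p
  -- (FS4)
  sig_coh : ∀ {s t}, Prec M s t → ∀ f ∈ M.F s.1 t.1, f s.2 = t.2 →
      ∀ ν' ≤ s.2, ∀ p ∈ lev (ν' + 1), sig s t p = sig (s.1, ν') (t.1, f ν') p
  -- (FS5)
  sig_id : ∀ {s t}, Prec M s t →
      (∃ f ∈ M.F s.1 t.1, f s.2 = t.2 ∧ ∀ ξ ≤ s.2, f ξ = ξ) →
      ∀ p ∈ lev (s.2 + 1), sig s t p = p
  -- (FS3)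
  e_maps : ∀ α < κ.ord, Set.MapsTo (e α) (lev (M.θ (α + 1))) (lev (M.θ α))
  -- (FS6)(a): `e α p` is a reduction of `p` with respect to `id ↾ ℙ_{θ_α}`
  red_id : ∀ α < κ.ord, ∀ p ∈ lev (M.θ (α + 1)), ∀ q ∈ lev (M.θ α),
      q ≤ e α p → ∃ r ∈ lev (M.θ (α + 1)), r ≤ q ∧ r ≤ p
  -- (FS6)(b): `e α p` is a reduction of `p` with respect to `σ_α = σ_{f_α}`
  red_sig : ∀ α < κ.ord, ∀ p ∈ lev (M.θ (α + 1)), ∀ q, ∀ ν < M.θ α,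
      q ∈ lev (ν + 1) → q ≤ e α p →
      ∃ r ∈ lev (M.θ (α + 1)), r ≤ sig (α, ν) (α + 1, M.fa α ν) q ∧ r ≤ p
  -- (FS7)
  e_id : ∀ α < κ.ord, ∀ p ∈ lev (M.θ α), e α p = p
  e_sig : ∀ α < κ.ord, ∀ ν < M.θ α, ∀ p ∈ lev (ν + 1),
      e α (sig (α, ν) (α + 1, M.fa α ν) p) = p


private lemma aux_id_le {f : Ordinal → Ordinal} {c : Ordinal}
    (hf : StrictMonoOn f (Set.Iio c)) : ∀ ξ < c, ξ ≤ f ξ := by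
  intro ξ
  induction ξ using Ordinal.induction with
  | h ξ IH =>
    intro hξ
    apply le_of_forall_lt
    intro ρ hρ
    exact lt_of_le_of_lt (IH ρ hρ (hρ.trans hξ))
      (hf (Set.mem_Iio.mpr (hρ.trans hξ)) (Set.mem_Iio.mpr hξ) hρ)

private lemma F_nonempty {κ : Cardinal} (M : SimplifiedMorass κ) :
    ∀ γ, γ ≤ κ.ord → ∀ β < γ, ∃ f, f ∈ M.F β γ := by
  intro γ
  induction γ using Ordinal.induction with
  | h γ IH =>
    intro hγ β hβ
    rcases Ordinal.zero_or_succ_or_isSuccLimit γ with h0 | ⟨δ, rfl⟩ | hlim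
    · rw [h0] at hβ; exact absurd hβ (not_lt_zero (a := β))
    · have hδκ : δ < κ.ord := lt_of_lt_of_le (Order.lt_succ δ) hγ
      have hsucc : δ + 1 = Order.succ δ := Ordinal.add_one_eq_succ δ
      rcases (Order.lt_succ_iff.mp hβ).lt_or_eq with hβδ | heq
      · obtain ⟨g, hg⟩ := IH δ (Order.lt_succ δ) hδκ.le β hβδ
        obtain ⟨h, hh, -⟩ := M.P2b β δ (δ + 1) hβδ
          (by rw [hsucc]; exact Order.lt_succ δ) (by rw [hsucc]; exact hγ)
          (M.fa δ) (M.P3a δ hδκ) g hg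
        exact ⟨h, by rwa [hsucc] at hh⟩
      · subst heq
        exact ⟨M.fa β, by rw [← hsucc]; exact M.P3a β hδκ⟩
    · have hθpos : 0 < M.θ γ := by
        rcases hγ.lt_or_eq with h | rfl
        · exact M.theta_pos γ h
        · rw [M.theta_top]
          exact lt_of_le_of_lt (zero_le (a := κ.ord))
            (Cardinal.ord_lt_ord.mpr (Order.lt_succ κ))
      obtain ⟨β₀, hβ₀γ, f, hf, -, -, -⟩ := M.P5 γ hγ hlim.pos 0 hθpos
      rcases lt_trichotomy β₀ β with h1 | rfl | h3
      · obtain ⟨f', hf', -⟩ := M.P2a β₀ β γ h1 hβ hγ f hf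
        exact ⟨f', hf'⟩
      · exact ⟨f, hf⟩
      · obtain ⟨g, hg⟩ := IH β₀ hβ₀γ (hβ₀γ.le.trans hγ) β h3
        obtain ⟨h, hh, -⟩ := M.P2b β β₀ γ h3 hβ₀γ hγ f hf g hg
        exact ⟨h, hh⟩

private lemma theta_mono {κ : Cardinal} (M : SimplifiedMorass κ) {β γ : Ordinal}
    (hβγ : β ≤ γ) (hγ : γ ≤ κ.ord) : M.θ β ≤ M.θ γ := by
  rcases hβγ.lt_or_eq with h | rfl
  · obtain ⟨f, hf⟩ := F_nonempty M γ hγ β h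
    apply le_of_forall_lt
    intro ξ hξ
    exact lt_of_le_of_lt (aux_id_le (M.F_mono β γ f hf) ξ hξ)
      (M.F_maps β γ f hf ξ hξ)
  · exact le_rfl

/-- The sequence `⟨γ_n(p) : n < ω⟩` from the recursive computation of `p*` is
strictly decreasing as long as it is defined; consequently `γ_n(p) = 0` for
some `n`, and the support `supp(p) = {γ_n(p) : n < ω}` is finite.  The
recursion data (`p_n`, `ν_n(p)`, `γ_n(p)`, the minimal node `s_n` and the
pull-back `q_n` of `p_n`) is given via its defining properties. -/
theorem fs_support_finite {κ : Cardinal} (hreg : κ.IsRegular)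
    (M : SimplifiedMorass κ) {P : Type} [PartialOrder P]
    (S : FSSystem κ M P) (p : P) (hp : p ∈ S.lev (M.θ κ.ord))
    (pn : ℕ → P) (νn γn : ℕ → Ordinal) (sn : ℕ → Ordinal × Ordinal) (qn : ℕ → P)
    (h0 : pn 0 = p)
    (hrec : ∀ n, (∀ m < n, γn m ≠ 0) →
      (pn n ∈ S.lev (νn n + 1) ∧ ∀ η < νn n, pn n ∉ S.lev (η + 1)) ∧
      ((sn n).1 = γn n ∧ Prec M (sn n) (κ.ord, νn n) ∧
        qn n ∈ S.lev ((sn n).2 + 1) ∧ S.sig (sn n) (κ.ord, νn n) (qn n) = pn n) ∧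
      (∀ s', Prec M s' (κ.ord, νn n) →
        (∃ q' ∈ S.lev (s'.2 + 1), S.sig s' (κ.ord, νn n) q' = pn n) →
        γn n ≤ s'.1) ∧
      (∀ β, γn n = β + 1 → pn (n + 1) = S.e β (qn n))) :
    (∀ n, (∀ m ≤ n, γn m ≠ 0) → γn (n + 1) < γn n) ∧
    (∃ n, γn n = 0) ∧
    (∃ N, γn N = 0 ∧ (∀ m < N, γn m ≠ 0) ∧
      Set.Finite {α | ∃ m ≤ N, γn m = α}) := by
  have hκθ : κ.ord < M.θ κ.ord := by
    rw [M.theta_top]; exact Cardinal.ord_lt_ord.mpr (Order.lt_succ κ)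
  -- the minimal pull-back level is never a limit ordinal
  have nolimit : ∀ n, (∀ m < n, γn m ≠ 0) → ¬ Order.IsSuccLimit (γn n) := by
    intro n hn hlim
    obtain ⟨⟨hmem, hminν⟩, ⟨hs1, hPrec, hq, hsig⟩, hγmin, hstep⟩ := hrec n hn
    rw [← hs1] at hlim
    obtain ⟨hlt, hle, hsθ, htθ, f, hf, hfν⟩ := hPrec
    obtain ⟨s₀, hPrec₀, q₀, hq₀, hsig₀⟩ := S.sig_limit hlim hlt.le hsθ (qn n) hq
    obtain ⟨hlt₀, hle₀, hs₀θ, ht₀θ, g, hg, hgν⟩ := hPrec₀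
    obtain ⟨h, hh, hcomp⟩ := M.P2b s₀.1 (sn n).1 κ.ord hlt₀ hlt le_rfl f hf g hg
    have hPrecfull : Prec M (sn n) (κ.ord, νn n) := ⟨hlt, hle, hsθ, htθ, f, hf, hfν⟩
    have hPrec₀' : Prec M s₀ (κ.ord, νn n) :=
      ⟨hlt₀.trans hlt, le_rfl, hs₀θ, htθ, h, hh, by rw [hcomp s₀.2 hs₀θ, hgν, hfν]⟩
    have hPrec₀'' : Prec M s₀ (sn n) := ⟨hlt₀, hle₀, hs₀θ, ht₀θ, g, hg, hgν⟩
    have hsig₀' : S.sig s₀ (κ.ord, νn n) q₀ = pn n := by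
      rw [← S.sig_comm hPrec₀'' hPrecfull q₀ hq₀, hsig₀, hsig]
    have hle1 : γn n ≤ s₀.1 := hγmin s₀ hPrec₀' ⟨q₀, hq₀, hsig₀'⟩
    rw [hs1] at hlt₀
    exact lt_irrefl _ (hle1.trans_lt hlt₀)
  -- main step: strict decrease
  have hdec : ∀ n, (∀ m ≤ n, γn m ≠ 0) → γn (n + 1) < γn n := by
    intro n hn
    have hn' : ∀ m < n, γn m ≠ 0 := fun m hm => hn m hm.le
    obtain ⟨⟨hmem, hminν⟩, ⟨hs1, hPrec, hq, hsig⟩, hγmin, hstep⟩ := hrec n hn'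
    have hsucc : ∃ β, γn n = β + 1 := by
      rcases Ordinal.zero_or_succ_or_isSuccLimit (γn n) with h0 | ⟨β, hβ⟩ | hlim
      · exact absurd h0 (hn n le_rfl)
      · exact ⟨β, by rw [← hβ, Ordinal.add_one_eq_succ]⟩
      · exact absurd hlim (nolimit n hn')
    obtain ⟨β, hβ⟩ := hsucc
    have hβ1κ : β + 1 < κ.ord := by
      have := hPrec.1; rwa [hs1, hβ] at this
    have hβκ : β < κ.ord :=
      lt_trans (by rw [Ordinal.add_one_eq_succ]; exact Order.lt_succ β) hβ1κ
    have hstep' : pn (n + 1) = S.e β (qn n) := hstep β hβ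
    have hqθ : qn n ∈ S.lev (M.θ (β + 1)) := by
      have h2 : (sn n).2 < M.θ (β + 1) := by
        have := hPrec.2.2.1; rwa [hs1, hβ] at this
      exact S.lev_mono (by rw [Ordinal.add_one_eq_succ, Order.succ_le_iff]; exact h2) hq
    have hp1θ : pn (n + 1) ∈ S.lev (M.θ β) := by
      rw [hstep']; exact S.e_maps β hβκ hqθ
    have hn1 : ∀ m < n + 1, γn m ≠ 0 := fun m hm => hn m (Nat.lt_succ_iff.mp hm)
    obtain ⟨⟨hmem1, hminν1⟩, ⟨ht1, hPrec1, hq1, hsig1⟩, hγmin1, -⟩ := hrec (n + 1) hn1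
    -- νₙ₊₁ < θ β
    have hνθ : νn (n + 1) < M.θ β := by
      by_contra hc
      push_neg at hc
      rcases Ordinal.zero_or_succ_or_isSuccLimit (M.θ β) with h0 | ⟨η, hη⟩ | hlimθ
      · exact absurd (h0 ▸ M.theta_pos β hβκ) (lt_irrefl _)
      · rw [← hη, ← Ordinal.add_one_eq_succ] at hp1θ
        have hην : η < νn (n + 1) := by
          have hlt : η < M.θ β := by rw [← hη]; exact Order.lt_succ η
          exact hlt.trans_le hc
        exact hminν1 η hην hp1θ
      · obtain ⟨η, hηθ, hmemη⟩ := S.lev_limit hlimθ _ hp1θ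
        have hmemη1 : pn (n + 1) ∈ S.lev (η + 1) :=
          S.lev_mono (le_of_lt (by rw [Ordinal.add_one_eq_succ]; exact Order.lt_succ η)) hmemη
        exact hminν1 η (hηθ.trans_le hc) hmemη1
    -- conclude γₙ₊₁ < β + 1 = γₙ
    rw [hβ]
    by_contra hc
    push_neg at hc
    have hne : γn (n + 1) ≠ 0 := by
      intro h; rw [h] at hc
      exact absurd hc (by simp)
    rcases Ordinal.zero_or_succ_or_isSuccLimit (γn (n + 1)) with h0 | ⟨β', hβ'⟩ | hlim1
    · exact hne h0
    · -- main case : γₙ₊₁ = β' + 1 with β ≤ β'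
      have hββ' : β ≤ β' := by
        rw [← hβ', Ordinal.add_one_eq_succ] at hc
        exact Order.succ_le_succ_iff.mp hc
      obtain ⟨hlt1, hle1, hsθ1, htθ1, f, hf, hfν⟩ := hPrec1
      have hs1e : (sn (n + 1)).1 = β' + 1 := by
        rw [ht1, ← hβ', Ordinal.add_one_eq_succ]
      have hδκ : β' < κ.ord := by
        have := hlt1; rw [hs1e] at this
        exact lt_trans (by rw [Ordinal.add_one_eq_succ]; exact Order.lt_succ β') this
      have hν''ν : (sn (n + 1)).2 ≤ νn (n + 1) := by
        have := aux_id_le (M.F_mono _ _ f hf) _ hsθ1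
        rwa [hfν] at this
      have hθβδ : M.θ β ≤ M.θ β' := theta_mono M hββ' hδκ.le
      have hs2θδ : (sn (n + 1)).2 < M.θ β' :=
        lt_of_lt_of_le (hν''ν.trans_lt hνθ) hθβδ
      obtain ⟨g, hg, hgid⟩ := M.P3c β' hδκ
      have hβ'1κ : β' + 1 < κ.ord := by rw [← hs1e]; exact hlt1
      have hβ'lt : β' < β' + 1 := by
        rw [Ordinal.add_one_eq_succ]; exact Order.lt_succ β'
      have hf' : f ∈ M.F (β' + 1) κ.ord := by rw [← hs1e]; exact hf
      obtain ⟨h, hh, hcomp⟩ := M.P2b β' (β' + 1) κ.ord hβ'lt hβ'1κ le_rfl f hf' g hg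
      have hhν : h (sn (n + 1)).2 = νn (n + 1) := by
        rw [hcomp _ hs2θδ, hgid _ hs2θδ, hfν]
      have hsθ1' : (sn (n + 1)).2 < M.θ (β' + 1) := by rw [← hs1e]; exact hsθ1
      have hPrecST : Prec M (β', (sn (n + 1)).2) (β' + 1, (sn (n + 1)).2) :=
        ⟨hβ'lt, hβ'1κ.le, hs2θδ, hsθ1', g, hg, hgid _ hs2θδ⟩
      have hPrecLow : Prec M (β', (sn (n + 1)).2) (κ.ord, νn (n + 1)) :=
        ⟨hδκ, le_rfl, hs2θδ, htθ1, h, hh, hhν⟩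
      have hsEq : ((β' + 1 : Ordinal), (sn (n + 1)).2) = sn (n + 1) := by
        rw [← hs1e]
      have hPrecMid : Prec M ((β' + 1 : Ordinal), (sn (n + 1)).2) (κ.ord, νn (n + 1)) := by
        rw [hsEq]; exact ⟨hlt1, hle1, hsθ1, htθ1, f, hf, hfν⟩
      have hsigid : S.sig (β', (sn (n + 1)).2) (β' + 1, (sn (n + 1)).2) (qn (n + 1))
          = qn (n + 1) :=
        S.sig_id hPrecST ⟨g, hg, hgid _ hs2θδ,
          fun ξ hξ => hgid ξ (lt_of_le_of_lt hξ hs2θδ)⟩ (qn (n + 1)) hq1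
      have hsiglow : S.sig (β', (sn (n + 1)).2) (κ.ord, νn (n + 1)) (qn (n + 1))
          = pn (n + 1) := by
        have hcm := S.sig_comm hPrecST hPrecMid (qn (n + 1)) hq1
        rw [hsigid, hsEq] at hcm
        rw [← hcm, hsig1]
      have hfin : γn (n + 1) ≤ β' :=
        hγmin1 (β', (sn (n + 1)).2) hPrecLow ⟨qn (n + 1), hq1, hsiglow⟩
      rw [← hβ'] at hfin
      exact absurd hfin (Order.lt_succ β').not_ge
    · exact absurd hlim1 (nolimit (n + 1) hn1)
  have hzero : ∃ n, γn n = 0 := by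
    by_contra hno
    push_neg at hno
    have hd : ∀ n, γn (n + 1) < γn n := fun n => hdec n (fun m _ => hno m)
    obtain ⟨k, hk⟩ := Ordinal.lt_wf.min_mem (Set.range γn) ⟨γn 0, 0, rfl⟩
    exact Ordinal.lt_wf.not_lt_min (Set.range γn)
      ⟨k + 1, rfl⟩ (by rw [← hk]; exact hd k)
  refine ⟨hdec, hzero, ?_⟩
  classical
  refine ⟨Nat.find hzero, Nat.find_spec hzero, fun m hm => Nat.find_min hzero hm, ?_⟩
  have heq : {α | ∃ m ≤ Nat.find hzero, γn m = α} = γn '' (Set.Iic (Nat.find hzero)) := by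
    ext α
    simp [Set.mem_image, Set.mem_Iic, eq_comm]
  rw [heq]
  exact (Set.finite_Iic (Nat.find hzero)).image γn
end

section
/- Let ⟨⟨ℙ_η : η ≤ κ⁺⟩, ⟨σ_{st} : s ≺ t⟩, ⟨e_α : α < κ⟩⟩ be an FS system along a simplified (κ,1)-morass, and for p ∈ ℙ_{κ⁺} let p* : κ → V and supp(p) be defined as in the FS system construction. If p, q ∈ ℙ_{κ⁺} and p*(α) is compatible with q*(α) for α = max(supp(p) ∩ supp(q)), then p and q are compatible in ℙ_{κ⁺}. -/
open Ordinal Set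

/-- `IsTrace S p pstar supp` says that `pstar : Ordinal → P` and
`supp ⊆ κ` are the trace function `p*` and the support `supp(p)` of
`p ∈ ℙ_{κ⁺}`, as computed by the recursion
`p₀ = p`, `ν_n(p) = min {η : p_n ∈ ℙ_{η+1}}`, `t_n(p) = ⟨κ, ν_n(p)⟩`,
`p⁽ⁿ⁾(α) = σ_{s t_n(p)}⁻¹(p_n)`, `γ_n(p) = min (dom p⁽ⁿ⁾)`,
`p_{n+1} = e_{γ_n(p)−1}(p⁽ⁿ⁾(γ_n(p)))`, stopping at stage `N` where
`γ_N(p) = 0`. -/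
def IsTrace {κ : Cardinal} {M : SimplifiedMorass κ} {P : Type} [PartialOrder P]
    (S : FSSystem κ M P) (p : P) (pstar : Ordinal → P) (supp : Set Ordinal) : Prop :=
  ∃ (N : ℕ) (pn : ℕ → P) (νn γn : ℕ → Ordinal)
    (sn : ℕ → Ordinal × Ordinal) (qn : ℕ → P),
    pn 0 = p ∧ γn N = 0 ∧ (∀ m < N, γn m ≠ 0) ∧
    supp = {α | ∃ m ≤ N, γn m = α} ∧
    (∀ n ≤ N,
      (pn n ∈ S.lev (νn n + 1) ∧ ∀ η < νn n, pn n ∉ S.lev (η + 1)) ∧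
      ((sn n).1 = γn n ∧ Prec M (sn n) (κ.ord, νn n) ∧
        qn n ∈ S.lev ((sn n).2 + 1) ∧ S.sig (sn n) (κ.ord, νn n) (qn n) = pn n) ∧
      (∀ s', Prec M s' (κ.ord, νn n) →
        (∃ q' ∈ S.lev (s'.2 + 1), S.sig s' (κ.ord, νn n) q' = pn n) →
        γn n ≤ s'.1) ∧
      (∀ β, γn n = β + 1 → n < N ∧ pn (n + 1) = S.e β (qn n))) ∧
    (∀ n ≤ N, ∀ α, γn n ≤ α → (∀ m < n, α < γn m) → α < κ.ord →
      ∃ s, s.1 = α ∧ Prec M s (κ.ord, νn n) ∧ pstar α ∈ S.lev (s.2 + 1) ∧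
        S.sig s (κ.ord, νn n) (pstar α) = pn n)


/-! ### Auxiliary lemmas -/

section FSAux

variable {κ : Cardinal.{0}} {M : SimplifiedMorass κ}

private lemma ordT_isLimit (hreg : κ.IsRegular) : Order.IsSuccLimit (Cardinal.ord κ) :=
  Cardinal.isSuccLimit_ord hreg.aleph0_le

/-- A strictly monotone map on an initial segment satisfies `ξ ≤ f ξ`. -/
private lemma ge_of_strictMonoOn {t : Ordinal} {f : Ordinal → Ordinal}
    (hf : StrictMonoOn f (Set.Iio t)) : ∀ ξ < t, ξ ≤ f ξ := by
  intro ξ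
  induction ξ using Ordinal.induction with
  | h ξ IH =>
    intro hξ
    by_contra hcon
    push_neg at hcon
    have h1 : f ξ ≤ f (f ξ) := IH (f ξ) hcon (hcon.trans hξ)
    have h2 : f (f ξ) < f ξ :=
      hf (Set.mem_Iio.2 (hcon.trans hξ)) (Set.mem_Iio.2 hξ) hcon
    exact absurd (h1.trans_lt h2) (lt_irrefl _)

private lemma theta_pos' (M : SimplifiedMorass κ) : ∀ b ≤ κ.ord, 0 < M.θ b := by
  intro b hb
  rcases lt_or_eq_of_le hb with hb' | hb'
  · exact M.theta_pos b hb'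
  · subst hb'
    rw [M.theta_top]
    have : (0 : Cardinal).ord < (Order.succ κ).ord :=
      Cardinal.ord_lt_ord.2 ((zero_le : (0:Cardinal) ≤ κ).trans_lt (Order.lt_succ κ))
    simpa using this

private lemma theta_top_big (M : SimplifiedMorass κ) : ∀ b < κ.ord, M.θ b < M.θ κ.ord := by
  intro b hb
  have h1 : M.θ b < κ.ord := M.theta_lt b hb
  have h2 : κ.ord < M.θ κ.ord := by
    rw [M.theta_top]
    exact Cardinal.ord_lt_ord.2 (Order.lt_succ κ)
  exact h1.trans h2

/-- Every `F a b` with `a < b ≤ κ.ord` is nonempty. -/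
private lemma F_nonempty_s9 (M : SimplifiedMorass κ) :
    ∀ b ≤ κ.ord, ∀ a < b, (M.F a b).Nonempty := by
  intro b
  induction b using Ordinal.induction with
  | h b IH =>
    intro hbT a hab
    rcases Ordinal.zero_or_succ_or_isSuccLimit b with h0 | ⟨d, hd⟩ | hlim
    · subst h0; exact absurd hab (not_lt_of_ge (zero_le : (0:Ordinal) ≤ a))
    · have hd1 : b = d + 1 := by rw [← hd, Ordinal.add_one_eq_succ]
      subst hd1
      have hdT : d < κ.ord := lt_of_lt_of_le (lt_add_one d) hbT
      rcases lt_or_eq_of_le (Order.lt_add_one_iff.1 hab) with had | had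
      · obtain ⟨g, hg⟩ := IH d (lt_add_one d) (le_of_lt hdT) a had
        obtain ⟨h, hh, -⟩ := M.P2b a d (d + 1) had (lt_add_one d)
          (Order.add_one_le_of_lt hdT) (M.fa d) (M.P3a d hdT) g hg
        exact ⟨h, hh⟩
      · subst had; exact ⟨M.fa a, M.P3a a hdT⟩
    · have hbpos : 0 < b := hlim.pos
      have hθb : (0 : Ordinal) < M.θ b := theta_pos' M b hbT
      obtain ⟨b5, hb5, f5, hf5, -⟩ := M.P5 b hbT hbpos 0 hθb
      rcases lt_trichotomy a b5 with h | h | h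
      · obtain ⟨g, hg⟩ := IH b5 hb5 (le_of_lt (hb5.trans_le hbT)) a h
        obtain ⟨h', hh', -⟩ := M.P2b a b5 b h hb5 hbT f5 hf5 g hg
        exact ⟨h', hh'⟩
      · subst h; exact ⟨f5, hf5⟩
      · obtain ⟨f', hf', -⟩ := M.P2a b5 a b h hab hbT f5 hf5
        exact ⟨f', hf'⟩

private lemma theta_mono_s9 (M : SimplifiedMorass κ) :
    ∀ a b, a ≤ b → b ≤ κ.ord → M.θ a ≤ M.θ b := by
  intro a b hab hbT
  rcases lt_or_eq_of_le hab with h | h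
  · obtain ⟨f, hf⟩ := F_nonempty_s9 M b hbT a h
    by_contra hcon
    push_neg at hcon
    have h1 : M.θ b ≤ f (M.θ b) := ge_of_strictMonoOn (M.F_mono a b f hf) _ hcon
    have h2 : f (M.θ b) < M.θ b := M.F_maps a b f hf _ hcon
    exact absurd (h1.trans_lt h2) (lt_irrefl _)
  · subst h; exact le_rfl

end FSAux

section FSAux2

variable {κ : Cardinal.{0}} {M : SimplifiedMorass κ}

/-- Rigidity: a morass map whose value stays below `θ` of the source level is
the identity there. -/
private lemma rstar (M : SimplifiedMorass κ) :
    ∀ b ≤ κ.ord, ∀ a < b, ∀ f ∈ M.F a b, ∀ ξ < M.θ a, f ξ < M.θ a → f ξ = ξ := by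
  intro b
  induction b using Ordinal.induction with
  | h b IHb =>
    intro hbT a hab f hf ξ hξ hsmall
    rcases Ordinal.zero_or_succ_or_isSuccLimit b with h0 | ⟨d, hd⟩ | hlim
    · subst h0; exact absurd hab (not_lt_of_ge (zero_le : (0:Ordinal) ≤ a))
    · -- successor case
      have hd1 : b = d + 1 := by rw [← hd, Ordinal.add_one_eq_succ]
      subst hd1
      have hdT : d < κ.ord := lt_of_lt_of_le (lt_add_one d) hbT
      have key : ∀ g ∈ M.F d (d + 1), ∀ η < M.θ d, g η < M.θ d → g η = η := by
        intro g hg η hη hgη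
        rcases M.P3d d hdT g hg with hid | hfa
        · exact hid η hη
        · rw [hfa η hη] at hgη ⊢
          obtain ⟨δ, hδ, hidδ, hjump⟩ := M.P3b d hdT
          rcases lt_or_ge η δ with hlt | hle
          · exact hidδ η hlt
          · exfalso
            have h1 : M.fa d δ ≤ M.fa d η := by
              rcases lt_or_eq_of_le hle with h | h
              · exact le_of_lt ((M.F_mono d (d+1) _ (M.P3a d hdT)) (Set.mem_Iio.2 hδ)
                  (Set.mem_Iio.2 hη) h)
              · subst h; exact le_rfl
            exact absurd ((hjump.trans h1).trans_lt hgη) (lt_irrefl _)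
      rcases lt_or_eq_of_le (Order.lt_add_one_iff.1 hab) with had | had
      · obtain ⟨f₂, hf₂, g₂, hg₂, hcomp⟩ := M.P2a a d (d+1) had (lt_add_one d) hbT f hf
        have hθad : M.θ a ≤ M.θ d := theta_mono_s9 M a d (le_of_lt had) (le_of_lt hdT)
        have hg₂ξ : g₂ ξ < M.θ d := M.F_maps a d g₂ hg₂ ξ hξ
        have h1 : g₂ ξ ≤ f₂ (g₂ ξ) :=
          ge_of_strictMonoOn (M.F_mono d (d+1) f₂ hf₂) _ hg₂ξ
        rw [hcomp ξ hξ] at hsmall ⊢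
        have h2 : g₂ ξ < M.θ a := h1.trans_lt hsmall
        have h3 : g₂ ξ = ξ := IHb d (lt_add_one d) (le_of_lt hdT) a had g₂ hg₂ ξ hξ h2
        rw [h3] at hsmall ⊢
        exact key f₂ hf₂ ξ (hξ.trans_le hθad) (hsmall.trans_le hθad)
      · subst had
        exact key f hf ξ hξ hsmall
    · -- limit case: well-founded descent on the value
      have KEY : ∀ v, ∀ a' < b, ∀ f' ∈ M.F a' b, ∀ ξ' < M.θ a',
          f' ξ' = v → v < M.θ a' → v = ξ' := by
        intro v
        induction v using Ordinal.induction with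
        | h v IHv =>
          intro a' ha' f' hf' ξ' hξ' hfv hva
          have hge : ξ' ≤ v := hfv ▸ ge_of_strictMonoOn (M.F_mono a' b f' hf') _ hξ'
          rcases lt_or_eq_of_le hge with hlt | heq
          · exfalso
            -- ξ' < v; find a map hitting ξ' and amalgamate
            have hξθb : ξ' < M.θ b := hξ'.trans_le (theta_mono_s9 M a' b (le_of_lt ha') hbT)
            obtain ⟨b5, hb5, f5, hf5, ξ5, hξ5, hf5ξ5⟩ := M.P5 b hbT hlim.pos ξ' hξθb
            obtain ⟨γ, hγ1, hγ2, hγ3, G, hG, h₁, hh₁, h₂, hh₂, hc₁, hc₂⟩ :=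
              M.P4 b hbT hlim a' b5 ha' hb5 f' hf' f5 hf5
            have hθγ : M.θ a' ≤ M.θ γ := theta_mono_s9 M a' γ (le_of_lt hγ1) (le_of_lt (hγ3.trans_le hbT))
            -- h₁ ξ' = ξ' by outer IH
            have hh₁ξ : h₁ ξ' < M.θ γ := M.F_maps a' γ h₁ hh₁ ξ' hξ'
            have h1le : h₁ ξ' ≤ G (h₁ ξ') := ge_of_strictMonoOn (M.F_mono γ b G hG) _ hh₁ξ
            have hGh₁ : G (h₁ ξ') = v := by rw [← hc₁ ξ' hξ']; exact hfv
            have hsm : h₁ ξ' < M.θ a' := by rw [hGh₁] at h1le; exact h1le.trans_lt hva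
            have hh₁id : h₁ ξ' = ξ' :=
              IHb γ hγ3 (le_of_lt (hγ3.trans_le hbT)) a' hγ1 h₁ hh₁ ξ' hξ' hsm
            have hGξ : G ξ' = v := by rw [← hh₁id]; exact hGh₁
            -- c := h₂ ξ5 maps to ξ' under G
            have hcθ : h₂ ξ5 < M.θ γ := M.F_maps b5 γ h₂ hh₂ ξ5 hξ5
            have hGc : G (h₂ ξ5) = ξ' := by rw [← hc₂ ξ5 hξ5]; exact hf5ξ5
            have hcle : h₂ ξ5 ≤ ξ' := by
              have := ge_of_strictMonoOn (M.F_mono γ b G hG) _ hcθ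
              rw [hGc] at this; exact this
            have hcne : h₂ ξ5 ≠ ξ' := by
              intro hcontr
              rw [hcontr, hGξ] at hGc
              exact absurd hGc (ne_of_gt hlt)
            have hclt : h₂ ξ5 < ξ' := lt_of_le_of_ne hcle hcne
            -- inner IH at value ξ'
            have := IHv ξ' hlt γ hγ3 G hG (h₂ ξ5) hcθ hGc (hξ'.trans_le hθγ)
            exact absurd this.symm (ne_of_lt hclt)
          · exact heq.symm
      exact KEY (f ξ) a hab f hf ξ hξ rfl hsmall

/-- Small-target collapse: if a branch sends `ρ` to `ν < θ c`, then `ρ = ν`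
and the branch is the identity up to `ρ`. -/
private lemma small_target (M : SimplifiedMorass κ) {c ν ρ : Ordinal} {Φ : Ordinal → Ordinal}
    (hc : c < κ.ord) (hν : ν < M.θ c) (hΦ : Φ ∈ M.F c κ.ord) (hρ : ρ < M.θ c)
    (hΦρ : Φ ρ = ν) : ρ = ν ∧ ∀ ξ ≤ ρ, Φ ξ = ξ := by
  have h1 : Φ ρ = ρ := rstar M κ.ord le_rfl c hc Φ hΦ ρ hρ (hΦρ ▸ hν)
  have hρν : ρ = ν := by rw [← hΦρ, h1]
  refine ⟨hρν, fun ξ hξ => ?_⟩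
  have hξθ : ξ < M.θ c := lt_of_le_of_lt hξ hρ
  have h2 : Φ ξ ≤ Φ ρ := by
    rcases lt_or_eq_of_le hξ with h | h
    · exact le_of_lt ((M.F_mono c κ.ord Φ hΦ) (Set.mem_Iio.2 hξθ) (Set.mem_Iio.2 hρ) h)
    · subst h; exact le_rfl
  exact rstar M κ.ord le_rfl c hc Φ hΦ ξ hξθ (lt_of_le_of_lt (h2.trans_eq h1) hρ)

end FSAux2

section FSAux3

variable {κ : Cardinal.{0}} {M : SimplifiedMorass κ} {P : Type} [PartialOrder P]
  {S : FSSystem κ M P}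

/-- Every element of a nonzero level lies in some successor level below it. -/
private lemma level_descent (S : FSSystem κ M P) :
    ∀ h, 0 < h → ∀ x ∈ S.lev h, ∃ ν, ν + 1 ≤ h ∧ x ∈ S.lev (ν + 1) := by
  intro h
  induction h using Ordinal.induction with
  | h h IH =>
    intro hpos x hx
    rcases Ordinal.zero_or_succ_or_isSuccLimit h with h0 | ⟨d, hd⟩ | hlim
    · subst h0; exact absurd hpos (lt_irrefl _)
    · have hd1 : h = d + 1 := by rw [← hd, Ordinal.add_one_eq_succ]
      exact ⟨d, le_of_eq hd1.symm, hd1 ▸ hx⟩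
    · obtain ⟨h', hh', hx'⟩ := S.lev_limit hlim x hx
      rcases eq_or_ne h' 0 with h0 | h0
      · subst h0
        refine ⟨0, ?_, S.lev_mono zero_le hx'⟩
        rw [zero_add]
        exact Order.one_le_iff_pos.2 hpos
      · obtain ⟨ν, hν1, hν2⟩ := IH h' hh' (pos_iff_ne_zero.2 h0) x hx'
        exact ⟨ν, hν1.trans (le_of_lt hh'), hν2⟩

/-- Transitivity of the tree relation (via `P2b`). -/
private lemma prec_trans {s u t : Ordinal × Ordinal}
    (h1 : Prec M s u) (h2 : Prec M u t) : Prec M s t := by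
  obtain ⟨h11, h12, h13, h14, g, hg, hgs⟩ := h1
  obtain ⟨h21, h22, h23, h24, f, hf, hfu⟩ := h2
  obtain ⟨h', hh', hcomp⟩ := M.P2b s.1 u.1 t.1 h11 h21 h22 f hf g hg
  exact ⟨h11.trans h21, h22, h13, h24, h', hh', by rw [hcomp s.2 h13, hgs, hfu]⟩

/-- A witness of `x` at level `c` targeting `(κ.ord, ν)`. -/
private def IsWitness (S : FSSystem κ M P) (c ν : Ordinal) (x : P)
    (ρ : Ordinal) (y : P) : Prop :=
  ρ < M.θ c ∧ y ∈ S.lev (ρ + 1) ∧ Prec M (c, ρ) (κ.ord, ν) ∧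
    S.sig (c, ρ) (κ.ord, ν) y = x

/-- Reroute a witness at `c` upward through an intermediate level `c'`. -/
private lemma witness_reroute {c c' ν : Ordinal} {x : P} {ρ : Ordinal} {y : P}
    (hW : IsWitness S c ν x ρ y) (hcc' : c < c') (hc' : c' < κ.ord) :
    ∃ ρ' y', IsWitness S c' ν x ρ' y' ∧ Prec M (c, ρ) (c', ρ') ∧
      S.sig (c, ρ) (c', ρ') y = y' := by
  obtain ⟨hρ, hy, hPrec, hsig⟩ := hW
  obtain ⟨-, hνT, -, hνθ, Φ, hΦ, hΦρ⟩ := hPrec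
  obtain ⟨F₂, hF₂, G₂, hG₂, hcomp⟩ := M.P2a c c' κ.ord hcc' hc' le_rfl Φ hΦ
  set ρ' := G₂ ρ with hρ'
  have hρ'θ : ρ' < M.θ c' := M.F_maps c c' G₂ hG₂ ρ hρ
  have hP1 : Prec M (c, ρ) (c', ρ') := ⟨hcc', le_of_lt hc', hρ, hρ'θ, G₂, hG₂, rfl⟩
  have hP2 : Prec M (c', ρ') (κ.ord, ν) := by
    refine ⟨hc', le_rfl, hρ'θ, hνθ, F₂, hF₂, ?_⟩
    show F₂ (G₂ ρ) = ν
    rw [← hcomp ρ hρ]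
    exact hΦρ
  set y' := S.sig (c, ρ) (c', ρ') y with hy'
  have hy'mem : y' ∈ S.lev (ρ' + 1) := S.sig_maps hP1 hy
  refine ⟨ρ', y', ⟨hρ'θ, hy'mem, hP2, ?_⟩, hP1, rfl⟩
  rw [hy', S.sig_comm hP1 hP2 y hy, hsig]

/-- Collapse: a witness with small target is the element itself. -/
private lemma witness_small_collapse {c ν : Ordinal} {x : P} {ρ : Ordinal} {y : P}
    (hW : IsWitness S c ν x ρ y) (hν : ν < M.θ c) : ρ = ν ∧ y = x := by
  obtain ⟨hρ, hy, hPrec, hsig⟩ := hW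
  have hc : c < κ.ord := hPrec.1
  obtain ⟨Φ, hΦ, hΦρ⟩ := hPrec.2.2.2.2
  obtain ⟨hρν, hid⟩ := small_target M hc hν hΦ hρ hΦρ
  refine ⟨hρν, ?_⟩
  have := S.sig_id hPrec ⟨Φ, hΦ, hΦρ, hid⟩ y hy
  rw [← hsig, this]

end FSAux3

section FSAux4

variable {κ : Cardinal.{0}} {M : SimplifiedMorass κ} {P : Type} [PartialOrder P]
  {S : FSSystem κ M P}

private lemma prec_fa (M : SimplifiedMorass κ) {d ρ : Ordinal} (hd : d < κ.ord)
    (hρ : ρ < M.θ d) : Prec M (d, ρ) (d + 1, M.fa d ρ) :=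
  ⟨lt_add_one d, Order.add_one_le_of_lt hd, hρ,
    M.F_maps d (d+1) _ (M.P3a d hd) ρ hρ, M.fa d, M.P3a d hd, rfl⟩

private lemma lev_succ_le {a b : Ordinal} (S : FSSystem κ M P) (h : a < b) {x : P}
    (hx : x ∈ S.lev (a + 1)) : x ∈ S.lev b :=
  S.lev_mono (Order.add_one_le_of_lt h) hx

/-- One-step version of the two-branch compatibility lemma. -/
private lemma one_step_compat (S : FSSystem κ M P) {d ρ₁ ρ₂ : Ordinal}
    (hd : d < κ.ord) (hρ₁ : ρ₁ < M.θ d) (hρ₂ : ρ₂ < M.θ d)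
    {f₁ f₂ : Ordinal → Ordinal} (hf₁ : f₁ ∈ M.F d (d+1)) (hf₂ : f₂ ∈ M.F d (d+1))
    {X Y W : P} (hX : X ∈ S.lev (ρ₁ + 1)) (hY : Y ∈ S.lev (ρ₂ + 1))
    (hW : W ∈ S.lev (M.θ d)) (hWX : W ≤ X) (hWY : W ≤ Y) :
    ∃ R ∈ S.lev (M.θ (d+1)), R ≤ S.sig (d, ρ₁) (d+1, f₁ ρ₁) X ∧
      R ≤ S.sig (d, ρ₂) (d+1, f₂ ρ₂) Y := by
  have hθd1 : M.θ d ≤ M.θ (d+1) :=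
    theta_mono_s9 M d (d+1) (le_of_lt (lt_add_one d)) (Order.add_one_le_of_lt hd)
  have hPrec₁fa : Prec M (d, ρ₁) (d+1, M.fa d ρ₁) := prec_fa M hd hρ₁
  have hPrec₂fa : Prec M (d, ρ₂) (d+1, M.fa d ρ₂) := prec_fa M hd hρ₂
  have hid₁ : (∀ ξ < M.θ d, f₁ ξ = ξ) → S.sig (d, ρ₁) (d+1, f₁ ρ₁) X = X := by
    intro hid
    have hP : Prec M (d, ρ₁) (d+1, f₁ ρ₁) := by
      rw [hid ρ₁ hρ₁]
      exact ⟨lt_add_one d, Order.add_one_le_of_lt hd, hρ₁, hρ₁.trans_le hθd1, f₁, hf₁,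
        hid ρ₁ hρ₁⟩
    exact S.sig_id hP ⟨f₁, hf₁, rfl, fun ξ hξ => hid ξ (lt_of_le_of_lt hξ hρ₁)⟩ X hX
  have hid₂ : (∀ ξ < M.θ d, f₂ ξ = ξ) → S.sig (d, ρ₂) (d+1, f₂ ρ₂) Y = Y := by
    intro hid
    have hP : Prec M (d, ρ₂) (d+1, f₂ ρ₂) := by
      rw [hid ρ₂ hρ₂]
      exact ⟨lt_add_one d, Order.add_one_le_of_lt hd, hρ₂, hρ₂.trans_le hθd1, f₂, hf₂,
        hid ρ₂ hρ₂⟩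
    exact S.sig_id hP ⟨f₂, hf₂, rfl, fun ξ hξ => hid ξ (lt_of_le_of_lt hξ hρ₂)⟩ Y hY
  rcases M.P3d d hd f₁ hf₁ with h1 | h1 <;> rcases M.P3d d hd f₂ hf₂ with h2 | h2
  · -- id, id
    exact ⟨W, S.lev_mono hθd1 hW, (hid₁ h1).symm ▸ hWX, (hid₂ h2).symm ▸ hWY⟩
  · -- id, fa
    have hYt : S.sig (d, ρ₂) (d+1, f₂ ρ₂) Y = S.sig (d, ρ₂) (d+1, M.fa d ρ₂) Y := by
      rw [h2 ρ₂ hρ₂]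
    have hYtmem : S.sig (d, ρ₂) (d+1, M.fa d ρ₂) Y ∈ S.lev (M.θ (d+1)) :=
      lev_succ_le S (M.F_maps d (d+1) _ (M.P3a d hd) ρ₂ hρ₂) (S.sig_maps hPrec₂fa hY)
    have he : S.e d (S.sig (d, ρ₂) (d+1, M.fa d ρ₂) Y) = Y := S.e_sig d hd ρ₂ hρ₂ Y hY
    obtain ⟨R, hR, hR1, hR2⟩ := S.red_id d hd _ hYtmem W hW (by rw [he]; exact hWY)
    exact ⟨R, hR, (hid₁ h1).symm ▸ (hR1.trans hWX), hYt ▸ hR2⟩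
  · -- fa, id
    have hXt : S.sig (d, ρ₁) (d+1, f₁ ρ₁) X = S.sig (d, ρ₁) (d+1, M.fa d ρ₁) X := by
      rw [h1 ρ₁ hρ₁]
    have hXtmem : S.sig (d, ρ₁) (d+1, M.fa d ρ₁) X ∈ S.lev (M.θ (d+1)) :=
      lev_succ_le S (M.F_maps d (d+1) _ (M.P3a d hd) ρ₁ hρ₁) (S.sig_maps hPrec₁fa hX)
    have he : S.e d (S.sig (d, ρ₁) (d+1, M.fa d ρ₁) X) = X := S.e_sig d hd ρ₁ hρ₁ X hX
    obtain ⟨R, hR, hR1, hR2⟩ := S.red_id d hd _ hXtmem W hW (by rw [he]; exact hWX)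
    exact ⟨R, hR, hXt ▸ hR2, (hid₂ h2).symm ▸ (hR1.trans hWY)⟩
  · -- fa, fa
    set ρ := max ρ₁ ρ₂ with hρdef
    have hρθ : ρ < M.θ d := max_lt hρ₁ hρ₂
    have hXρ : X ∈ S.lev (ρ + 1) :=
      S.lev_mono (Order.add_one_le_of_lt (Order.lt_add_one_iff.2 (le_max_left ρ₁ ρ₂))) hX
    have hYρ : Y ∈ S.lev (ρ + 1) :=
      S.lev_mono (Order.add_one_le_of_lt (Order.lt_add_one_iff.2 (le_max_right ρ₁ ρ₂))) hY
    obtain ⟨W', hW', hW'X, hW'Y⟩ := S.lev_bot (Order.add_one_le_of_lt hρθ) X hXρ Y hYρ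
      ⟨W, hW, hWX, hWY⟩
    have hPrecρ : Prec M (d, ρ) (d+1, M.fa d ρ) := prec_fa M hd hρθ
    refine ⟨S.sig (d, ρ) (d+1, M.fa d ρ) W',
      lev_succ_le S (M.F_maps d (d+1) _ (M.P3a d hd) ρ hρθ) (S.sig_maps hPrecρ hW'), ?_, ?_⟩
    · have hmono := S.sig_mono hPrecρ X hXρ W' hW' hW'X
      have hcoh := S.sig_coh hPrecρ (M.fa d) (M.P3a d hd) rfl ρ₁ (le_max_left ρ₁ ρ₂) X hX
      rw [h1 ρ₁ hρ₁]
      exact hmono.trans_eq (hcoh.symm ▸ rfl : S.sig (d,ρ) (d+1, M.fa d ρ) X =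
        S.sig (d,ρ₁) (d+1, M.fa d ρ₁) X)
    · have hmono := S.sig_mono hPrecρ Y hYρ W' hW' hW'Y
      have hcoh := S.sig_coh hPrecρ (M.fa d) (M.P3a d hd) rfl ρ₂ (le_max_right ρ₁ ρ₂) Y hY
      rw [h2 ρ₂ hρ₂]
      exact hmono.trans_eq (hcoh.symm ▸ rfl : S.sig (d,ρ) (d+1, M.fa d ρ) Y =
        S.sig (d,ρ₂) (d+1, M.fa d ρ₂) Y)

end FSAux4

section FSAux5

variable {κ : Cardinal.{0}} {M : SimplifiedMorass κ} {P : Type} [PartialOrder P]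

/-- Two-branch compatibility: the images of a jointly-bounded pair under two
(possibly different) branch embeddings are compatible. -/
private lemma two_branch_compat (S : FSSystem κ M P) :
    ∀ τ, τ ≤ κ.ord → ∀ c, c < τ → ∀ ν₁ ν₂ : Ordinal, ν₁ < M.θ c → ν₂ < M.θ c →
    ∀ Φ₁ ∈ M.F c τ, ∀ Φ₂ ∈ M.F c τ, ∀ x ∈ S.lev (ν₁ + 1), ∀ y ∈ S.lev (ν₂ + 1),
    ∀ w ∈ S.lev (M.θ c), w ≤ x → w ≤ y →
    ∃ R ∈ S.lev (M.θ τ), R ≤ S.sig (c, ν₁) (τ, Φ₁ ν₁) x ∧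
      R ≤ S.sig (c, ν₂) (τ, Φ₂ ν₂) y := by
  intro τ
  induction τ using Ordinal.induction with
  | h τ IH =>
    intro hτT c hcτ ν₁ ν₂ hν₁ hν₂ Φ₁ hΦ₁ Φ₂ hΦ₂ x hx y hy w hw hwx hwy
    rcases Ordinal.zero_or_succ_or_isSuccLimit τ with h0 | ⟨d, hd⟩ | hlim
    · subst h0; exact absurd hcτ (not_lt_of_ge (zero_le : (0:Ordinal) ≤ c))
    · -- successor case
      have hd1 : τ = d + 1 := by rw [← hd, Ordinal.add_one_eq_succ]
      subst hd1
      have hdT : d < κ.ord := lt_of_lt_of_le (lt_add_one d) hτT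
      have hcd : c ≤ d := Order.lt_add_one_iff.1 hcτ
      rcases lt_or_eq_of_le hcd with hcd' | hcd'
      · -- c < d : factor through d
        obtain ⟨f₁, hf₁, g₁, hg₁, hcomp₁⟩ := M.P2a c d (d+1) hcd' (lt_add_one d) hτT Φ₁ hΦ₁
        obtain ⟨f₂, hf₂, g₂, hg₂, hcomp₂⟩ := M.P2a c d (d+1) hcd' (lt_add_one d) hτT Φ₂ hΦ₂
        obtain ⟨w', hw', hw'X, hw'Y⟩ := IH d (lt_add_one d) (le_of_lt hdT) c hcd'
          ν₁ ν₂ hν₁ hν₂ g₁ hg₁ g₂ hg₂ x hx y hy w hw hwx hwy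
        have hg₁ν : g₁ ν₁ < M.θ d := M.F_maps c d g₁ hg₁ ν₁ hν₁
        have hg₂ν : g₂ ν₂ < M.θ d := M.F_maps c d g₂ hg₂ ν₂ hν₂
        have hPx : Prec M (c, ν₁) (d, g₁ ν₁) := ⟨hcd', le_of_lt hdT, hν₁, hg₁ν, g₁, hg₁, rfl⟩
        have hPy : Prec M (c, ν₂) (d, g₂ ν₂) := ⟨hcd', le_of_lt hdT, hν₂, hg₂ν, g₂, hg₂, rfl⟩
        have hX'mem : S.sig (c, ν₁) (d, g₁ ν₁) x ∈ S.lev (g₁ ν₁ + 1) := S.sig_maps hPx hx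
        have hY'mem : S.sig (c, ν₂) (d, g₂ ν₂) y ∈ S.lev (g₂ ν₂ + 1) := S.sig_maps hPy hy
        obtain ⟨R, hR, hR1, hR2⟩ := one_step_compat S hdT hg₁ν hg₂ν hf₁ hf₂
          hX'mem hY'mem hw' hw'X hw'Y
        refine ⟨R, hR, ?_, ?_⟩
        · have hP1 : Prec M (c, ν₁) (d, g₁ ν₁) := ⟨hcd', le_of_lt hdT, hν₁, hg₁ν, g₁, hg₁, rfl⟩
          have hP2 : Prec M (d, g₁ ν₁) (d+1, f₁ (g₁ ν₁)) := by
            refine ⟨lt_add_one d, hτT, hg₁ν, ?_, f₁, hf₁, rfl⟩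
            exact M.F_maps d (d+1) f₁ hf₁ _ hg₁ν
          have hcomm := S.sig_comm hP1 hP2 x hx
          rw [hcomp₁ ν₁ hν₁, ← hcomm]
          exact hR1
        · have hP1 : Prec M (c, ν₂) (d, g₂ ν₂) := ⟨hcd', le_of_lt hdT, hν₂, hg₂ν, g₂, hg₂, rfl⟩
          have hP2 : Prec M (d, g₂ ν₂) (d+1, f₂ (g₂ ν₂)) := by
            refine ⟨lt_add_one d, hτT, hg₂ν, ?_, f₂, hf₂, rfl⟩
            exact M.F_maps d (d+1) f₂ hf₂ _ hg₂ν
          have hcomm := S.sig_comm hP1 hP2 y hy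
          rw [hcomp₂ ν₂ hν₂, ← hcomm]
          exact hR2
      · -- c = d
        subst hcd'
        exact one_step_compat S hdT hν₁ hν₂ hΦ₁ hΦ₂ hx hy hw hwx hwy
    · -- limit case: amalgamate via P4
      obtain ⟨γ, hγ1, -, hγ3, G, hG, h₁, hh₁, h₂, hh₂, hc₁, hc₂⟩ :=
        M.P4 τ hτT hlim c c hcτ hcτ Φ₁ hΦ₁ Φ₂ hΦ₂
      have hγT : γ ≤ κ.ord := le_of_lt (hγ3.trans_le hτT)
      obtain ⟨w', hw', hw'X, hw'Y⟩ := IH γ hγ3 hγT c hγ1 ν₁ ν₂ hν₁ hν₂ h₁ hh₁ h₂ hh₂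
        x hx y hy w hw hwx hwy
      have hh₁ν : h₁ ν₁ < M.θ γ := M.F_maps c γ h₁ hh₁ ν₁ hν₁
      have hh₂ν : h₂ ν₂ < M.θ γ := M.F_maps c γ h₂ hh₂ ν₂ hν₂
      set ρ := max (h₁ ν₁) (h₂ ν₂) with hρdef
      have hρθ : ρ < M.θ γ := max_lt hh₁ν hh₂ν
      have hPx : Prec M (c, ν₁) (γ, h₁ ν₁) := ⟨hγ1, hγT, hν₁, hh₁ν, h₁, hh₁, rfl⟩
      have hPy : Prec M (c, ν₂) (γ, h₂ ν₂) := ⟨hγ1, hγT, hν₂, hh₂ν, h₂, hh₂, rfl⟩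
      have hX'mem : S.sig (c, ν₁) (γ, h₁ ν₁) x ∈ S.lev (h₁ ν₁ + 1) := S.sig_maps hPx hx
      have hY'mem : S.sig (c, ν₂) (γ, h₂ ν₂) y ∈ S.lev (h₂ ν₂ + 1) := S.sig_maps hPy hy
      have hX'ρ : S.sig (c, ν₁) (γ, h₁ ν₁) x ∈ S.lev (ρ + 1) :=
        S.lev_mono (Order.add_one_le_of_lt (Order.lt_add_one_iff.2 (le_max_left _ _))) hX'mem
      have hY'ρ : S.sig (c, ν₂) (γ, h₂ ν₂) y ∈ S.lev (ρ + 1) :=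
        S.lev_mono (Order.add_one_le_of_lt (Order.lt_add_one_iff.2 (le_max_right _ _))) hY'mem
      obtain ⟨w'', hw'', hw''X, hw''Y⟩ := S.lev_bot (Order.add_one_le_of_lt hρθ) _ hX'ρ _ hY'ρ
        ⟨w', hw', hw'X, hw'Y⟩
      have hGρ : G ρ < M.θ τ := M.F_maps γ τ G hG ρ hρθ
      have hPrecρ : Prec M (γ, ρ) (τ, G ρ) := ⟨hγ3, hτT, hρθ, hGρ, G, hG, rfl⟩
      refine ⟨S.sig (γ, ρ) (τ, G ρ) w'', lev_succ_le S hGρ (S.sig_maps hPrecρ hw''), ?_, ?_⟩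
      · have hmono := S.sig_mono hPrecρ _ hX'ρ w'' hw'' hw''X
        have hcoh := S.sig_coh hPrecρ G hG rfl (h₁ ν₁) (le_max_left _ _) _ hX'mem
        have hP1 : Prec M (c, ν₁) (γ, h₁ ν₁) := ⟨hγ1, hγT, hν₁, hh₁ν, h₁, hh₁, rfl⟩
        have hP2 : Prec M (γ, h₁ ν₁) (τ, G (h₁ ν₁)) :=
          ⟨hγ3, hτT, hh₁ν, M.F_maps γ τ G hG _ hh₁ν, G, hG, rfl⟩
        have hcomm := S.sig_comm hP1 hP2 x hx
        rw [hc₁ ν₁ hν₁]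
        calc S.sig (γ, ρ) (τ, G ρ) w'' ≤ S.sig (γ, ρ) (τ, G ρ) (S.sig (c, ν₁) (γ, h₁ ν₁) x) := hmono
        _ = S.sig (γ, h₁ ν₁) (τ, G (h₁ ν₁)) (S.sig (c, ν₁) (γ, h₁ ν₁) x) := hcoh
        _ = S.sig (c, ν₁) (τ, G (h₁ ν₁)) x := hcomm
      · have hmono := S.sig_mono hPrecρ _ hY'ρ w'' hw'' hw''Y
        have hcoh := S.sig_coh hPrecρ G hG rfl (h₂ ν₂) (le_max_right _ _) _ hY'mem
        have hP1 : Prec M (c, ν₂) (γ, h₂ ν₂) := ⟨hγ1, hγT, hν₂, hh₂ν, h₂, hh₂, rfl⟩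
        have hP2 : Prec M (γ, h₂ ν₂) (τ, G (h₂ ν₂)) :=
          ⟨hγ3, hτT, hh₂ν, M.F_maps γ τ G hG _ hh₂ν, G, hG, rfl⟩
        have hcomm := S.sig_comm hP1 hP2 y hy
        rw [hc₂ ν₂ hν₂]
        calc S.sig (γ, ρ) (τ, G ρ) w'' ≤ S.sig (γ, ρ) (τ, G ρ) (S.sig (c, ν₂) (γ, h₂ ν₂) y) := hmono
        _ = S.sig (γ, h₂ ν₂) (τ, G (h₂ ν₂)) (S.sig (c, ν₂) (γ, h₂ ν₂) y) := hcoh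
        _ = S.sig (c, ν₂) (τ, G (h₂ ν₂)) y := hcomm

end FSAux5

section FSAux6

variable {κ : Cardinal.{0}} {M : SimplifiedMorass κ} {P : Type} [PartialOrder P]

/-- Push a witness down one or more levels, to any prescribed level `ζ`. -/
private lemma witness_down (S : FSSystem κ M P) {ν : Ordinal} {x : P} :
    ∀ ℓ, ∀ ζ ≤ ℓ, ζ < κ.ord → ν < M.θ ζ → (∃ ρ y, IsWitness S ℓ ν x ρ y) →
      ∃ ρ y, IsWitness S ζ ν x ρ y := by
  intro ℓ
  induction ℓ using Ordinal.induction with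
  | h ℓ IH =>
    intro ζ hζℓ hζT hν ⟨ρℓ, yℓ, hW⟩
    rcases eq_or_lt_of_le hζℓ with heq | hζℓ'
    · subst heq; exact ⟨ρℓ, yℓ, hW⟩
    obtain ⟨hρℓ, hyℓ, hPrecℓ, hsigℓ⟩ := hW
    have hℓT : ℓ < κ.ord := hPrecℓ.1
    rcases Ordinal.zero_or_succ_or_isSuccLimit ℓ with h0 | ⟨ξ, hξ⟩ | hlim
    · subst h0; exact absurd hζℓ' (not_lt_of_ge (zero_le : (0:Ordinal) ≤ ζ))
    · -- ℓ = ξ + 1 : use the identity embedding (FS5) to descend one step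
      have hℓ1 : ℓ = ξ + 1 := by rw [← hξ, Ordinal.add_one_eq_succ]
      subst hℓ1
      have hξT : ξ < κ.ord := (lt_add_one ξ).trans hℓT
      have hζξ : ζ ≤ ξ := Order.lt_add_one_iff.1 hζℓ'
      -- ρℓ ≤ ν < θ ζ ≤ θ ξ
      obtain ⟨Φ, hΦ, hΦρ⟩ := hPrecℓ.2.2.2.2
      have hρν : ρℓ ≤ ν := by
        have := ge_of_strictMonoOn (M.F_mono (ξ+1) κ.ord Φ hΦ) ρℓ hρℓ
        rwa [hΦρ] at this
      have hρξ : ρℓ < M.θ ξ :=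
        lt_of_le_of_lt hρν (hν.trans_le (theta_mono_s9 M ζ ξ hζξ (le_of_lt hξT)))
      obtain ⟨g, hg, hgid⟩ := M.P3c ξ hξT
      have hPid : Prec M (ξ, ρℓ) (ξ+1, ρℓ) :=
        ⟨lt_add_one ξ, le_of_lt hℓT, hρξ, hρℓ, g, hg, hgid ρℓ hρξ⟩
      have hsigid : S.sig (ξ, ρℓ) (ξ+1, ρℓ) yℓ = yℓ :=
        S.sig_id hPid ⟨g, hg, hgid ρℓ hρξ, fun η hη => hgid η (lt_of_le_of_lt hη hρξ)⟩ yℓ hyℓ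
      have hPcomp : Prec M (ξ, ρℓ) (κ.ord, ν) := prec_trans hPid hPrecℓ
      have hsig' : S.sig (ξ, ρℓ) (κ.ord, ν) yℓ = x := by
        have := S.sig_comm hPid hPrecℓ yℓ hyℓ
        rw [hsigid] at this
        rw [← this, hsigℓ]
      exact IH ξ (lt_add_one ξ) ζ hζξ hζT hν ⟨ρℓ, yℓ, ⟨hρξ, hyℓ, hPcomp, hsig'⟩⟩
    · -- ℓ limit : descend via (FS2) limit clause
      obtain ⟨s', hPrec', q', hq', hsig'⟩ :=
        S.sig_limit (t := (ℓ, ρℓ)) hlim (le_of_lt hℓT) hρℓ yℓ hyℓ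
      obtain ⟨ℓ', ρ'⟩ := s'
      have hℓ'ℓ : ℓ' < ℓ := hPrec'.1
      have hρ'θ : ρ' < M.θ ℓ' := hPrec'.2.2.1
      have hPcomp : Prec M (ℓ', ρ') (κ.ord, ν) := prec_trans hPrec' hPrecℓ
      have hsig'' : S.sig (ℓ', ρ') (κ.ord, ν) q' = x := by
        have := S.sig_comm hPrec' hPrecℓ q' hq'
        rw [hsig'] at this
        rw [← this, hsigℓ]
      have hWit' : IsWitness S ℓ' ν x ρ' q' := ⟨hρ'θ, hq', hPcomp, hsig''⟩
      rcases le_or_gt ζ ℓ' with hle | hlt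
      · exact IH ℓ' hℓ'ℓ ζ hle hζT hν ⟨ρ', q', hWit'⟩
      · obtain ⟨ρ'', y'', hW'', -, -⟩ := witness_reroute hWit' hlt hζT
        exact ⟨ρ'', y'', hW''⟩

/-- Every element of a small successor level has a witness at any level `ζ`
with `ν < θ ζ`. -/
private lemma witness_exists (hreg : κ.IsRegular) (S : FSSystem κ M P)
    {ζ ν : Ordinal} (hζ : ζ < κ.ord) (hν : ν < M.θ ζ) {x : P}
    (hx : x ∈ S.lev (ν + 1)) : ∃ ρ y, IsWitness S ζ ν x ρ y := by
  have hνT : ν < M.θ κ.ord := hν.trans (theta_top_big M ζ hζ)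
  obtain ⟨s, hPrec, q, hq, hsig⟩ :=
    S.sig_limit (t := (κ.ord, ν)) (ordT_isLimit hreg) le_rfl hνT x hx
  obtain ⟨ℓ, ρ⟩ := s
  have hW : IsWitness S ℓ ν x ρ q := ⟨hPrec.2.2.1, hq, hPrec, hsig⟩
  rcases le_or_gt ζ ℓ with hle | hlt
  · exact witness_down S ℓ ζ hle hζ hν ⟨ρ, q, hW⟩
  · obtain ⟨ρ'', y'', hW'', -, -⟩ := witness_reroute hW hlt hζ
    exact ⟨ρ'', y'', hW''⟩

end FSAux6

section TraceAux

variable {κ : Cardinal.{0}} {M : SimplifiedMorass κ} {P : Type} [PartialOrder P]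
  {S : FSSystem κ M P} {N : ℕ} {pn : ℕ → P} {nu ga : ℕ → Ordinal}
  {sn : ℕ → Ordinal × Ordinal} {qn : ℕ → P}

/-- Bundle of the pointwise trace clauses. -/
private def TrCl (S : FSSystem κ M P) (N : ℕ) (pn : ℕ → P) (nu ga : ℕ → Ordinal)
    (sn : ℕ → Ordinal × Ordinal) (qn : ℕ → P) : Prop :=
  ∀ n ≤ N,
    (pn n ∈ S.lev (nu n + 1) ∧ ∀ η < nu n, pn n ∉ S.lev (η + 1)) ∧
    ((sn n).1 = ga n ∧ Prec M (sn n) (κ.ord, nu n) ∧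
      qn n ∈ S.lev ((sn n).2 + 1) ∧ S.sig (sn n) (κ.ord, nu n) (qn n) = pn n) ∧
    (∀ s', Prec M s' (κ.ord, nu n) →
      (∃ q' ∈ S.lev (s'.2 + 1), S.sig s' (κ.ord, nu n) q' = pn n) →
      ga n ≤ s'.1) ∧
    (∀ β, ga n = β + 1 → n < N ∧ pn (n + 1) = S.e β (qn n))

private lemma ga_lt_T (hcl : TrCl S N pn nu ga sn qn) : ∀ n ≤ N, ga n < κ.ord := by
  intro n hn
  obtain ⟨-, ⟨h1, h2, -, -⟩, -, -⟩ := hcl n hn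
  exact h1 ▸ h2.1

private lemma nu_lt_thetaT (hcl : TrCl S N pn nu ga sn qn) : ∀ n ≤ N, nu n < M.θ κ.ord := by
  intro n hn
  obtain ⟨-, ⟨-, h2, -, -⟩, -, -⟩ := hcl n hn
  exact h2.2.2.2.1

/-- Nonzero support ordinals are successors. -/
private lemma ga_succ (hcl : TrCl S N pn nu ga sn qn) :
    ∀ n ≤ N, ga n ≠ 0 → ∃ δ, ga n = δ + 1 := by
  intro n hn hne
  rcases Ordinal.zero_or_succ_or_isSuccLimit (ga n) with h0 | ⟨δ, hδ⟩ | hlim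
  · exact absurd h0 hne
  · exact ⟨δ, by rw [← hδ, Ordinal.add_one_eq_succ]⟩
  · exfalso
    obtain ⟨-, ⟨h1, h2, h3, h4⟩, hmin, -⟩ := hcl n hn
    have hlim' : Order.IsSuccLimit (sn n).1 := h1 ▸ hlim
    obtain ⟨s'', hPrec'', q'', hq'', hsig''⟩ :=
      S.sig_limit hlim' (le_of_lt h2.1) h2.2.2.1 (qn n) h3
    have hPcomp : Prec M s'' (κ.ord, nu n) := prec_trans hPrec'' h2
    have hsig : S.sig s'' (κ.ord, nu n) q'' = pn n := by
      have := S.sig_comm hPrec'' h2 q'' hq''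
      rw [hsig''] at this
      rw [← this, h4]
    have := hmin s'' hPcomp ⟨q'', hq'', hsig⟩
    exact absurd (this.trans_lt (h1 ▸ hPrec''.1)) (lt_irrefl _)

/-- Chain facts at an interface. -/
private lemma chain_facts (hcl : TrCl S N pn nu ga sn qn) {j : ℕ} (hj : j ≤ N)
    {δ : Ordinal} (hδ : ga j = δ + 1) :
    j < N ∧ pn (j+1) = S.e δ (qn j) ∧ δ < κ.ord ∧ qn j ∈ S.lev (M.θ (δ+1)) ∧
      pn (j+1) ∈ S.lev (M.θ δ) ∧ nu (j+1) < M.θ δ := by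
  obtain ⟨-, ⟨h1, h2, h3, -⟩, -, h4⟩ := hcl j hj
  obtain ⟨hjN, heq⟩ := h4 δ hδ
  have hδT : δ < κ.ord := (lt_add_one δ).trans (hδ ▸ ga_lt_T hcl j hj)
  have hq : qn j ∈ S.lev (M.θ (δ+1)) := by
    have : (sn j).2 < M.θ (δ+1) := by
      have := h2.2.2.1
      rwa [h1, hδ] at this
    exact lev_succ_le S this h3
  have hp1 : pn (j+1) ∈ S.lev (M.θ δ) := heq ▸ S.e_maps δ hδT hq
  have hnu : nu (j+1) < M.θ δ := by
    obtain ⟨⟨hm1, hm2⟩, -, -, -⟩ := hcl (j+1) hjN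
    obtain ⟨ν', hν'1, hν'2⟩ := level_descent S (M.θ δ) (M.theta_pos δ hδT) _ hp1
    by_contra hcon
    push_neg at hcon
    have hν'lt : ν' < nu (j+1) := lt_of_lt_of_le (Order.lt_add_one_iff.2 le_rfl |>.trans_le hν'1) hcon |>.trans_le le_rfl
    exact hm2 ν' hν'lt hν'2
  exact ⟨hjN, heq, hδT, hq, hp1, hnu⟩

/-- The support ordinals strictly decrease along the trace. -/
private lemma ga_mono (hreg : κ.IsRegular) (hcl : TrCl S N pn nu ga sn qn)
    (hNe : ∀ m < N, ga m ≠ 0) : ∀ j < N, ga (j+1) < ga j := by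
  intro j hj
  obtain ⟨δ, hδ⟩ := ga_succ hcl j (le_of_lt hj) (hNe j hj)
  obtain ⟨hjN, heq, hδT, hq, hp1, hnu⟩ := chain_facts hcl (le_of_lt hj) hδ
  obtain ⟨⟨hm1, -⟩, -, hmin, -⟩ := hcl (j+1) hjN
  obtain ⟨ρ, y, hW⟩ := witness_exists hreg S hδT hnu hm1
  obtain ⟨hρ, hy, hPrec, hsig⟩ := hW
  have := hmin (δ, ρ) hPrec ⟨y, hy, hsig⟩
  calc ga (j+1) ≤ δ := this
  _ < δ + 1 := lt_add_one δ
  _ = ga j := hδ.symm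

private lemma ga_antitone (hreg : κ.IsRegular) (hcl : TrCl S N pn nu ga sn qn)
    (hNe : ∀ m < N, ga m ≠ 0) : ∀ j ≤ N, ∀ i ≤ j, ga j ≤ ga i := by
  intro j
  induction j with
  | zero => intro _ i hi; interval_cases i; exact le_rfl
  | succ j IH =>
    intro hj i hi
    rcases Nat.lt_or_ge i (j+1) with h | h
    · have h1 : ga (j+1) < ga j := ga_mono hreg hcl hNe j hj
      exact le_of_lt (h1.trans_le (IH (le_of_lt hj) i (Nat.lt_add_one_iff.1 h)))
    · have : i = j + 1 := le_antisymm hi h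
      subst this; exact le_rfl

private lemma ga_strict (hreg : κ.IsRegular) (hcl : TrCl S N pn nu ga sn qn)
    (hNe : ∀ m < N, ga m ≠ 0) : ∀ j ≤ N, ∀ i < j, ga j < ga i := by
  intro j hj i hi
  have h1 : ga (i+1) < ga i := ga_mono hreg hcl hNe i (lt_of_lt_of_le hi hj)
  exact lt_of_le_of_lt (ga_antitone hreg hcl hNe j hj (i+1) hi) h1

end TraceAux

section CrossAux

variable {κ : Cardinal.{0}} {M : SimplifiedMorass κ} {P : Type} [PartialOrder P]
  {S : FSSystem κ M P} {N : ℕ} {pn : ℕ → P} {nu ga : ℕ → Ordinal}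
  {sn : ℕ → Ordinal × Ordinal} {qn : ℕ → P}

/-- Invariant data: a pair of witnesses at level `c` with a common lower bound. -/
private def InvAt (S : FSSystem κ M P) (c ν₁ : Ordinal) (x : P) (ν₂ : Ordinal) (z : P) : Prop :=
  ∃ ρ A μ B w, IsWitness S c ν₁ x ρ A ∧ IsWitness S c ν₂ z μ B ∧
    w ∈ S.lev (M.θ c) ∧ w ≤ A ∧ w ≤ B

/-- Transfer the invariant upward over a support-free stretch. -/
private lemma stretch {c c' ν₁ ν₂ : Ordinal} {x z : P}
    (hcc' : c ≤ c') (hc' : c' < κ.ord) (hI : InvAt S c ν₁ x ν₂ z) :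
    InvAt S c' ν₁ x ν₂ z := by
  rcases eq_or_lt_of_le hcc' with heq | hlt
  · subst heq; exact hI
  obtain ⟨ρ, A, μ, B, w, hWA, hWB, hw, hwA, hwB⟩ := hI
  obtain ⟨ρ', A', hWA', hP1, hs1⟩ := witness_reroute hWA hlt hc'
  obtain ⟨μ', B', hWB', hP2, hs2⟩ := witness_reroute hWB hlt hc'
  obtain ⟨-, -, -, -, Φ₁, hΦ₁, hΦ₁ρ⟩ := hP1
  obtain ⟨-, -, -, -, Φ₂, hΦ₂, hΦ₂μ⟩ := hP2
  obtain ⟨R, hR, hR1, hR2⟩ := two_branch_compat S c' (le_of_lt hc') c hlt ρ μ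
    hWA.1 hWB.1 Φ₁ hΦ₁ Φ₂ hΦ₂ A hWA.2.1 B hWB.2.1 w hw hwA hwB
  have hΦ₁ρ' : Φ₁ ρ = ρ' := hΦ₁ρ
  have hΦ₂μ' : Φ₂ μ = μ' := hΦ₂μ
  refine ⟨ρ', A', μ', B', R, hWA', hWB', hR, ?_, ?_⟩
  · rw [← hs1, ← hΦ₁ρ']; exact hR1
  · rw [← hs2, ← hΦ₂μ']; exact hR2

/-- Crossing a support point of the first trace. -/
private lemma cross_step (hcl : TrCl S N pn nu ga sn qn) {j : ℕ} (hj : j ≤ N)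
    {δ : Ordinal} (hδ : ga j = δ + 1) {ν₂ : Ordinal} {z : P} {c : Ordinal} (hc : c ≤ δ)
    (hI : InvAt S c (nu (j+1)) (pn (j+1)) ν₂ z) :
    InvAt S (δ+1) (nu j) (pn j) ν₂ z := by
  obtain ⟨hjN, heq, hδT, hqlev, hplev, hnusm⟩ := chain_facts hcl hj hδ
  -- move to level δ
  have hI' : InvAt S δ (nu (j+1)) (pn (j+1)) ν₂ z := stretch hc hδT hI
  obtain ⟨ρ, A, μ, B, w, hWA, hWB, hw, hwA, hwB⟩ := hI'
  -- collapse the first witness: A = pn (j+1) = e δ (qn j)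
  obtain ⟨hρν, hAeq⟩ := witness_small_collapse hWA hnusm
  -- the new first witness at δ+1 : the chain element qn j at node sn j
  obtain ⟨-, ⟨h1, h2, h3, h4⟩, -, -⟩ := hcl j hj
  have hsnj : sn j = ((δ+1 : Ordinal), (sn j).2) := by
    rw [← hδ, ← h1]
  have hWp : IsWitness S (δ+1) (nu j) (pn j) (sn j).2 (qn j) := by
    refine ⟨?_, h3, ?_, ?_⟩
    · have := h2.2.2.1
      rwa [h1, hδ] at this
    · rw [← hsnj]; exact h2
    · rw [← hsnj]; exact h4
  -- reroute the passive witness one step up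
  obtain ⟨μ', B', hWB', hPB, hsB⟩ := witness_reroute hWB (lt_add_one δ)
    (hδ ▸ ga_lt_T hcl j hj)
  obtain ⟨-, -, -, hμ'θ, H, hH, hHμ⟩ := hPB
  have hHμ' : H μ = μ' := hHμ
  have hμ'θ' : μ' < M.θ (δ+1) := hμ'θ
  have hwApn : w ≤ S.e δ (qn j) := by rw [← heq, ← hAeq]; exact hwA
  rcases M.P3d δ hδT H hH with hid | hfa
  · -- identity step : B' = B
    have hB'B : B' = B := by
      have hPid : Prec M (δ, μ) (δ+1, μ) := by
        refine ⟨lt_add_one δ, Order.add_one_le_of_lt hδT, hWB.1, ?_, H, hH, hid μ hWB.1⟩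
        show μ < M.θ (δ+1)
        rw [← hid μ hWB.1, hHμ']
        exact hμ'θ'
      have hs := S.sig_id hPid ⟨H, hH, hid μ hWB.1, fun η hη => hid η (lt_of_le_of_lt hη hWB.1)⟩
        B hWB.2.1
      have hμ'μ : μ' = μ := by rw [← hHμ', hid μ hWB.1]
      rw [← hsB, hμ'μ, hs]
    obtain ⟨R, hR, hR1, hR2⟩ := S.red_id δ hδT (qn j)
      (lev_succ_le S (by have := h2.2.2.1; rwa [h1, hδ] at this) h3) w hw hwApn
    exact ⟨(sn j).2, qn j, μ', B', R, hWp, hWB', hR, hR2, hB'B ▸ (hR1.trans hwB)⟩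
  · -- fa step
    set ξ := max (nu (j+1)) μ with hξdef
    have hξθ : ξ < M.θ δ := max_lt hnusm hWB.1
    have hpnξ : pn (j+1) ∈ S.lev (ξ + 1) := by
      obtain ⟨⟨hm1, -⟩, -, -, -⟩ := hcl (j+1) hjN
      exact S.lev_mono (Order.add_one_le_of_lt (Order.lt_add_one_iff.2 (le_max_left _ _))) hm1
    have hBξ : B ∈ S.lev (ξ + 1) :=
      S.lev_mono (Order.add_one_le_of_lt (Order.lt_add_one_iff.2 (le_max_right _ _))) hWB.2.1
    obtain ⟨w', hw', hw'A, hw'B⟩ := S.lev_bot (Order.add_one_le_of_lt hξθ) _ hpnξ _ hBξ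
      ⟨w, hw, hAeq ▸ hwA, hwB⟩
    have hw'e : w' ≤ S.e δ (qn j) := by rw [← heq]; exact hw'A
    obtain ⟨R, hR, hR1, hR2⟩ := S.red_sig δ hδT (qn j)
      (lev_succ_le S (by have := h2.2.2.1; rwa [h1, hδ] at this) h3) w' ξ hξθ hw' hw'e
    have hPξ : Prec M (δ, ξ) (δ+1, M.fa δ ξ) := prec_fa M hδT hξθ
    have hB' : B' = S.sig (δ, μ) (δ+1, M.fa δ μ) B := by
      rw [← hsB]
      congr 1
      rw [Prod.ext_iff]
      exact ⟨rfl, by rw [← hHμ']; exact hfa μ hWB.1⟩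
    have hchain : S.sig (δ, ξ) (δ+1, M.fa δ ξ) w' ≤ B' := by
      have hmono := S.sig_mono hPξ B hBξ w' hw' hw'B
      have hcoh := S.sig_coh hPξ (M.fa δ) (M.P3a δ hδT) rfl μ (le_max_right _ _) B hWB.2.1
      rw [hB']
      exact hmono.trans_eq hcoh
    exact ⟨(sn j).2, qn j, μ', B', R, hWp, hWB', hR, hR2, hR1.trans hchain⟩

end CrossAux

section ClimbAux

variable {κ : Cardinal.{0}} {M : SimplifiedMorass κ} {P : Type} [PartialOrder P]
  {S : FSSystem κ M P}

private lemma invAt_swap {c ν₁ ν₂ : Ordinal} {x z : P} (h : InvAt S c ν₁ x ν₂ z) :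
    InvAt S c ν₂ z ν₁ x := by
  obtain ⟨ρ, A, μ, B, w, h1, h2, h3, h4, h5⟩ := h
  exact ⟨μ, B, ρ, A, w, h2, h1, h3, h5, h4⟩

private lemma climb (hreg : κ.IsRegular) :
    ∀ k : ℕ, ∀ (N : ℕ) (pn : ℕ → P) (nu ga : ℕ → Ordinal) (sn : ℕ → Ordinal × Ordinal)
      (qn : ℕ → P), TrCl S N pn nu ga sn qn → (∀ m < N, ga m ≠ 0) →
      ∀ (N' : ℕ) (pn' : ℕ → P) (nu' ga' : ℕ → Ordinal) (sn' : ℕ → Ordinal × Ordinal)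
      (qn' : ℕ → P), TrCl S N' pn' nu' ga' sn' qn' → (∀ m < N', ga' m ≠ 0) →
      ∀ (α : Ordinal), (∀ i ≤ N, ∀ i' ≤ N', ga i = ga' i' → ga i ≤ α) →
      ∀ n m : ℕ, n + m = k → n ≤ N → m ≤ N' → ∀ c, α ≤ c → c < κ.ord →
      (∀ i < n, c < ga i) → (∀ i < m, c < ga' i) →
      InvAt S c (nu n) (pn n) (nu' m) (pn' m) →
      ∃ r ∈ S.lev (M.θ κ.ord), r ≤ pn 0 ∧ r ≤ pn' 0 := by
  intro k
  induction k with
  | zero =>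
    intro N pn nu ga sn qn hcl hNe N' pn' nu' ga' sn' qn' hcl' hNe' α hdisj
      n m hk hn hm c hαc hcT hwp hwq hI
    obtain ⟨hn0, hm0⟩ := Nat.add_eq_zero.1 hk
    subst hn0; subst hm0
    obtain ⟨ρ, A, μ, B, w, hWA, hWB, hw, hwA, hwB⟩ := hI
    obtain ⟨hρ, hA, hPA, hsA⟩ := hWA
    obtain ⟨hμ, hB, hPB, hsB⟩ := hWB
    obtain ⟨-, -, -, -, Φ₁, hΦ₁, hΦ₁ρ⟩ := hPA
    obtain ⟨-, -, -, -, Φ₂, hΦ₂, hΦ₂μ⟩ := hPB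
    obtain ⟨R, hR, hR1, hR2⟩ := two_branch_compat S κ.ord le_rfl c hcT ρ μ hρ hμ
      Φ₁ hΦ₁ Φ₂ hΦ₂ A hA B hB w hw hwA hwB
    have hΦ₁ρ' : Φ₁ ρ = nu 0 := hΦ₁ρ
    have hΦ₂μ' : Φ₂ μ = nu' 0 := hΦ₂μ
    refine ⟨R, hR, ?_, ?_⟩
    · rw [hΦ₁ρ', hsA] at hR1; exact hR1
    · rw [hΦ₂μ', hsB] at hR2; exact hR2
  | succ k IH =>
    intro N pn nu ga sn qn hcl hNe N' pn' nu' ga' sn' qn' hcl' hNe' α hdisj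
      n m hk hn hm c hαc hcT hwp hwq hI
    have crossP : ∀ j : ℕ, n = j + 1 → (∀ i < m, ga j < ga' i) →
        ∃ r ∈ S.lev (M.θ κ.ord), r ≤ pn 0 ∧ r ≤ pn' 0 := by
      intro j hnj hq'
      subst hnj
      have hjN : j < N := lt_of_lt_of_le (Nat.lt_succ_self j) hn
      obtain ⟨δ, hδ⟩ := ga_succ hcl j (le_of_lt hjN) (hNe j hjN)
      have hcδ : c ≤ δ := Order.lt_add_one_iff.1 (hδ ▸ hwp j (Nat.lt_succ_self j))
      have hI' := cross_step hcl (le_of_lt hjN) hδ hcδ hI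
      have hβT : δ + 1 < κ.ord := hδ ▸ ga_lt_T hcl j (le_of_lt hjN)
      refine IH N pn nu ga sn qn hcl hNe N' pn' nu' ga' sn' qn' hcl' hNe' α hdisj
        j m (by omega) (le_of_lt hjN) hm (δ+1)
        (hαc.trans (hcδ.trans (le_of_lt (lt_add_one δ)))) hβT ?_ ?_ hI'
      · intro i hij
        exact hδ ▸ ga_strict hreg hcl hNe j (le_of_lt hjN) i hij
      · intro i him
        exact hδ ▸ hq' i him
    have crossQ : ∀ j' : ℕ, m = j' + 1 → (∀ i < n, ga' j' < ga i) →
        ∃ r ∈ S.lev (M.θ κ.ord), r ≤ pn 0 ∧ r ≤ pn' 0 := by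
      intro j' hmj hp'
      subst hmj
      have hjN' : j' < N' := lt_of_lt_of_le (Nat.lt_succ_self j') hm
      obtain ⟨δ, hδ⟩ := ga_succ hcl' j' (le_of_lt hjN') (hNe' j' hjN')
      have hcδ : c ≤ δ := Order.lt_add_one_iff.1 (hδ ▸ hwq j' (Nat.lt_succ_self j'))
      have hI' := cross_step hcl' (le_of_lt hjN') hδ hcδ (invAt_swap hI)
      have hβT : δ + 1 < κ.ord := hδ ▸ ga_lt_T hcl' j' (le_of_lt hjN')
      have hdisj' : ∀ i' ≤ N', ∀ i ≤ N, ga' i' = ga i → ga' i' ≤ α := by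
        intro i' hi' i hi heq
        rw [heq]
        exact heq ▸ hdisj i hi i' hi' heq.symm
      obtain ⟨r, hr, h1, h2⟩ := IH N' pn' nu' ga' sn' qn' hcl' hNe' N pn nu ga sn qn hcl hNe
        α hdisj' j' n (by omega) (le_of_lt hjN') hn (δ+1)
        (hαc.trans (hcδ.trans (le_of_lt (lt_add_one δ)))) hβT
        (fun i hij => hδ ▸ ga_strict hreg hcl' hNe' j' (le_of_lt hjN') i hij)
        (fun i him => hδ ▸ hp' i him) hI'
      exact ⟨r, hr, h2, h1⟩
    rcases n with _ | j
    · rcases m with _ | j'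
      · omega
      · exact crossQ j' rfl (fun i hi => absurd hi (Nat.not_lt_zero i))
    · rcases m with _ | j'
      · exact crossP j rfl (fun i hi => absurd hi (Nat.not_lt_zero i))
      · rcases lt_trichotomy (ga j) (ga' j') with hlt | heq | hgt
        · refine crossP j rfl (fun i hi => ?_)
          exact hlt.trans_le (ga_antitone hreg hcl' hNe' j' (by omega) i (Nat.lt_succ_iff.1 hi))
        · exfalso
          have h1 : ga j ≤ α := hdisj j (by omega) j' (by omega) heq
          exact absurd (h1.trans hαc) (not_le.2 (hwp j (Nat.lt_succ_self j)))
        · refine crossQ j' rfl (fun i hi => ?_)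
          exact hgt.trans_le (ga_antitone hreg hcl hNe j (by omega) i (Nat.lt_succ_iff.1 hi))

end ClimbAux
/-- Lemma 4.1: if `p*(α)` and `q*(α)` are compatible (in `ℙ_{θ_α}`) for
`α = max (supp(p) ∩ supp(q))`, then `p` and `q` are compatible in `ℙ_{κ⁺}`. -/
theorem fs_compatible {κ : Cardinal} (hreg : κ.IsRegular)
    (M : SimplifiedMorass κ) {P : Type} [PartialOrder P]
    (S : FSSystem κ M P) (p q : P)
    (hp : p ∈ S.lev (M.θ κ.ord)) (hq : q ∈ S.lev (M.θ κ.ord))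
    (pstar qstar : Ordinal → P) (sp sq : Set Ordinal)
    (htp : IsTrace S p pstar sp) (htq : IsTrace S q qstar sq)
    (α : Ordinal) (hmem : α ∈ sp ∩ sq) (hmax : ∀ β ∈ sp ∩ sq, β ≤ α)
    (hcompat : ∃ r ∈ S.lev (M.θ α), r ≤ pstar α ∧ r ≤ qstar α) :
    ∃ r ∈ S.lev (M.θ κ.ord), r ≤ p ∧ r ≤ q := by
  classical
  obtain ⟨N, pn, nu, ga, sn, qn, h0, hN, hNe, hsupp, hclraw, hlast⟩ := htp
  obtain ⟨N', pn', nu', ga', sn', qn', h0', hN', hNe', hsupp', hclraw', hlast'⟩ := htq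
  have hcl : TrCl S N pn nu ga sn qn := hclraw
  have hcl' : TrCl S N' pn' nu' ga' sn' qn' := hclraw'
  -- disjointness of the supports above α
  have hdisj : ∀ i ≤ N, ∀ i' ≤ N', ga i = ga' i' → ga i ≤ α := by
    intro i hi i' hi' heq
    refine hmax (ga i) ⟨?_, ?_⟩
    · rw [hsupp]; exact ⟨i, hi, rfl⟩
    · rw [hsupp', heq]; exact ⟨i', hi', rfl⟩
  -- α is in both supports
  obtain ⟨hα1, hα2⟩ := hmem
  rw [hsupp] at hα1
  rw [hsupp'] at hα2
  obtain ⟨kp, hkp, hkpα⟩ := hα1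
  obtain ⟨kq, hkq, hkqα⟩ := hα2
  have hαT : α < κ.ord := hkpα ▸ ga_lt_T hcl kp hkp
  -- least stages at α
  have hex : ∃ n, n ≤ N ∧ ga n ≤ α := ⟨kp, hkp, le_of_eq hkpα⟩
  have hex' : ∃ n, n ≤ N' ∧ ga' n ≤ α := ⟨kq, hkq, le_of_eq hkqα⟩
  set n₀ := Nat.find hex with hn₀def
  set m₀ := Nat.find hex' with hm₀def
  obtain ⟨hn₀N, hn₀α⟩ := Nat.find_spec hex
  obtain ⟨hm₀N, hm₀α⟩ := Nat.find_spec hex'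
  have hwinp : ∀ i < n₀, α < ga i := by
    intro i hi
    have h1 := Nat.find_min hex hi
    push_neg at h1
    exact h1 (le_trans (le_of_lt hi) hn₀N |>.trans le_rfl)
  have hwinq : ∀ i < m₀, α < ga' i := by
    intro i hi
    have h1 := Nat.find_min hex' hi
    push_neg at h1
    exact h1 (le_trans (le_of_lt hi) hm₀N |>.trans le_rfl)
  -- starting invariant at α
  obtain ⟨s, hs1, hsP, hsmem, hssig⟩ := hlast n₀ hn₀N α hn₀α hwinp hαT
  obtain ⟨s', hs1', hsP', hsmem', hssig'⟩ := hlast' m₀ hm₀N α hm₀α hwinq hαT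
  have hsae : s = ((α : Ordinal), s.2) := by rw [← hs1]
  have hsae' : s' = ((α : Ordinal), s'.2) := by rw [← hs1']
  have hWp : IsWitness S α (nu n₀) (pn n₀) s.2 (pstar α) := by
    refine ⟨?_, hsmem, ?_, ?_⟩
    · have := hsP.2.2.1; rwa [hs1] at this
    · rw [← hsae]; exact hsP
    · rw [← hsae]; exact hssig
  have hWq : IsWitness S α (nu' m₀) (pn' m₀) s'.2 (qstar α) := by
    refine ⟨?_, hsmem', ?_, ?_⟩
    · have := hsP'.2.2.1; rwa [hs1'] at this
    · rw [← hsae']; exact hsP'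
    · rw [← hsae']; exact hssig'
  obtain ⟨r, hr, hr1, hr2⟩ := hcompat
  have hI : InvAt S α (nu n₀) (pn n₀) (nu' m₀) (pn' m₀) :=
    ⟨s.2, pstar α, s'.2, qstar α, r, hWp, hWq, hr, hr1, hr2⟩
  obtain ⟨R, hR, hR1, hR2⟩ := climb hreg (n₀ + m₀) N pn nu ga sn qn hcl hNe
    N' pn' nu' ga' sn' qn' hcl' hNe' α hdisj n₀ m₀ rfl hn₀N hm₀N α le_rfl hαT
    hwinp hwinq hI
  exact ⟨R, hR, h0 ▸ hR1, h0' ▸ hR2⟩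
end

section
/- Let θ > ω₁ + 1 be an ordinal and let P(θ) be Tennenbaum's forcing of finite trees on θ. Then the set A = { p ∈ P(θ) : x_p = {α, α+1, α+2, ω₁, ω₁+1} for some α < ω₁, with α <_p α+1 <_p ω₁, α <_p α+2 <_p ω₁+1, and α+1 ≁_p α+2 } is an antichain in P(θ) of size ω₁. In particular, P(θ) does not satisfy the countable chain condition. -/
open Ordinal

/-- Tennenbaum's forcing `P(θ)`: finite trees `p = ⟨x_p, <_p⟩` with
`x_p ⊆ θ` finite and `<_p` a tree order contained in the ordinal order. -/
structure TCond (θ : Ordinal) where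
  x : Finset Ordinal
  lt : Ordinal → Ordinal → Prop
  mem_lt : ∀ a ∈ x, a < θ
  lt_mem : ∀ a b, lt a b → a ∈ x ∧ b ∈ x
  lt_ord : ∀ a b, lt a b → a < b
  lt_trans : ∀ a b c, lt a b → lt b c → lt a c
  lt_tree : ∀ a b c, lt a c → lt b c → a = b ∨ lt a b ∨ lt b a

/-- `TExt p q`: the condition `p` extends `q`, i.e. `p ≤ q` in `P(θ)`:
`x_p ⊇ x_q` and `<_q = <_p ∩ x_q²`. -/
def TExt {θ : Ordinal} (p q : TCond θ) : Prop :=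
  q.x ⊆ p.x ∧ ∀ a b, q.lt a b ↔ (p.lt a b ∧ a ∈ q.x ∧ b ∈ q.x)

/-- Incompatibility in `P(θ)`: no common extension. -/
def TIncomp {θ : Ordinal} (p q : TCond θ) : Prop :=
  ¬∃ r : TCond θ, TExt r p ∧ TExt r q

namespace TennAux

def L (o0 o1 o2 o3 o4 : Ordinal) : List (Ordinal × Ordinal) :=
  [(o0, o1), (o1, o3), (o0, o3), (o0, o2), (o2, o4), (o0, o4)]

variable {o0 o1 o2 o3 o4 : Ordinal}
variable (h01 : o0 < o1) (h12 : o1 < o2) (h23 : o2 < o3) (h34 : o3 < o4)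

include h01 h12 h23 h34

theorem L_trans : ∀ a b c, (a, b) ∈ L o0 o1 o2 o3 o4 → (b, c) ∈ L o0 o1 o2 o3 o4 →
    (a, c) ∈ L o0 o1 o2 o3 o4 := by
  have h02 := h01.trans h12
  have h03 := h02.trans h23
  have h13 := h12.trans h23
  have h14 := h13.trans h34
  have h24 := h23.trans h34
  have h04 := h03.trans h34
  intro a b c h1 h2
  simp only [L, List.mem_cons, Prod.mk.injEq, List.not_mem_nil, or_false] at h1 h2 ⊢
  rcases h1 with ⟨rfl, rfl⟩|⟨rfl, rfl⟩|⟨rfl, rfl⟩|⟨rfl, rfl⟩|⟨rfl, rfl⟩|⟨rfl, rfl⟩ <;>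
    simp_all [h01.ne, h01.ne', h12.ne, h12.ne', h23.ne, h23.ne', h34.ne, h34.ne',
      h02.ne, h02.ne', h03.ne, h03.ne', h13.ne, h13.ne', h14.ne, h14.ne',
      h24.ne, h24.ne', h04.ne, h04.ne']

theorem L_tree : ∀ a b c, (a, c) ∈ L o0 o1 o2 o3 o4 → (b, c) ∈ L o0 o1 o2 o3 o4 →
    a = b ∨ (a, b) ∈ L o0 o1 o2 o3 o4 ∨ (b, a) ∈ L o0 o1 o2 o3 o4 := by
  have h02 := h01.trans h12
  have h03 := h02.trans h23
  have h13 := h12.trans h23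
  have h14 := h13.trans h34
  have h24 := h23.trans h34
  have h04 := h03.trans h34
  intro a b c h1 h2
  simp only [L, List.mem_cons, Prod.mk.injEq, List.not_mem_nil, or_false] at h1 h2 ⊢
  rcases h1 with ⟨rfl, rfl⟩|⟨rfl, rfl⟩|⟨rfl, rfl⟩|⟨rfl, rfl⟩|⟨rfl, rfl⟩|⟨rfl, rfl⟩ <;>
    simp_all [h01.ne, h01.ne', h12.ne, h12.ne', h23.ne, h23.ne', h34.ne, h34.ne',
      h02.ne, h02.ne', h03.ne, h03.ne', h13.ne, h13.ne', h14.ne, h14.ne',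
      h24.ne, h24.ne', h04.ne, h04.ne'] <;>
    (rcases h2 with rfl | rfl <;> tauto)

theorem L_ord : ∀ a b, (a, b) ∈ L o0 o1 o2 o3 o4 → a < b := by
  have h02 := h01.trans h12
  have h03 := h02.trans h23
  have h04 := h03.trans h34
  have h24 := h23.trans h34
  have h13 := h12.trans h23
  intro a b h
  simp only [L, List.mem_cons, Prod.mk.injEq, List.not_mem_nil, or_false] at h
  rcases h with ⟨rfl, rfl⟩|⟨rfl, rfl⟩|⟨rfl, rfl⟩|⟨rfl, rfl⟩|⟨rfl, rfl⟩|⟨rfl, rfl⟩ <;> assumption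

omit h01 h12 h23 h34 in
theorem L_mem : ∀ a b, (a, b) ∈ L o0 o1 o2 o3 o4 →
    a ∈ ({o0, o1, o2, o3, o4} : Finset Ordinal) ∧
      b ∈ ({o0, o1, o2, o3, o4} : Finset Ordinal) := by
  intro a b h
  simp only [L, List.mem_cons, Prod.mk.injEq, List.not_mem_nil, or_false] at h
  rcases h with ⟨rfl, rfl⟩|⟨rfl, rfl⟩|⟨rfl, rfl⟩|⟨rfl, rfl⟩|⟨rfl, rfl⟩|⟨rfl, rfl⟩ <;>
    simp [Finset.mem_insert]

end TennAux

theorem tenn_w1_succ : (Cardinal.aleph 1).ord < (Cardinal.aleph 1).ord + 1 := by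
  rw [Ordinal.add_one_eq_succ]; exact Order.lt_succ _

/-- The chain `α < α+1 < α+2 < ω₁`, packaged. -/
theorem tenn_chain {α : Ordinal} (hα : α < (Cardinal.aleph 1).ord) :
    α < α + 1 ∧ α + 1 < α + 2 ∧ α + 2 < (Cardinal.aleph 1).ord := by
  have hlim : Order.IsSuccLimit ((Cardinal.aleph 1).ord) :=
    Cardinal.isSuccLimit_ord (Cardinal.aleph0_le_aleph 1)
  have e2 : α + 2 = (α + 1) + 1 := by
    rw [add_assoc]; norm_num
  have h01 : α < α + 1 := by
    rw [Ordinal.add_one_eq_succ]; exact Order.lt_succ α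
  have h12 : α + 1 < α + 2 := by
    rw [e2, Ordinal.add_one_eq_succ (α+1)]; exact Order.lt_succ (α + 1)
  have hα1 : α + 1 < (Cardinal.aleph 1).ord := by
    rw [Ordinal.add_one_eq_succ]; exact hlim.succ_lt hα
  have hα2 : α + 2 < (Cardinal.aleph 1).ord := by
    rw [e2, Ordinal.add_one_eq_succ (α+1)]; exact hlim.succ_lt hα1
  exact ⟨h01, h12, hα2⟩

/-- The condition `p_α`. -/
noncomputable def tenn_cond (θ : Ordinal) (hθ : (Cardinal.aleph 1).ord + 1 < θ)
    (α : Ordinal) (hα : α < (Cardinal.aleph 1).ord) : TCond θ where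
  x := {α, α + 1, α + 2, (Cardinal.aleph 1).ord, (Cardinal.aleph 1).ord + 1}
  lt a b := (a, b) ∈ TennAux.L α (α + 1) (α + 2) (Cardinal.aleph 1).ord
    ((Cardinal.aleph 1).ord + 1)
  mem_lt := by
    obtain ⟨h01, h12, h23⟩ := tenn_chain hα
    have h34 : (Cardinal.aleph 1).ord < (Cardinal.aleph 1).ord + 1 := tenn_w1_succ
    have hw : (Cardinal.aleph 1).ord < θ := lt_trans h34 hθ
    intro a ha
    simp only [Finset.mem_insert, Finset.mem_singleton] at ha
    rcases ha with rfl|rfl|rfl|rfl|rfl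
    · exact lt_trans (lt_trans (h01.trans h12) h23) hw
    · exact lt_trans (h12.trans h23) hw
    · exact lt_trans h23 hw
    · exact hw
    · exact hθ
  lt_mem := TennAux.L_mem
  lt_ord := by
    obtain ⟨h01, h12, h23⟩ := tenn_chain hα
    have h34 : (Cardinal.aleph 1).ord < (Cardinal.aleph 1).ord + 1 := tenn_w1_succ
    exact TennAux.L_ord h01 h12 h23 h34
  lt_trans := by
    obtain ⟨h01, h12, h23⟩ := tenn_chain hα
    have h34 : (Cardinal.aleph 1).ord < (Cardinal.aleph 1).ord + 1 := tenn_w1_succ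
    exact TennAux.L_trans h01 h12 h23 h34
  lt_tree := by
    obtain ⟨h01, h12, h23⟩ := tenn_chain hα
    have h34 : (Cardinal.aleph 1).ord < (Cardinal.aleph 1).ord + 1 := tenn_w1_succ
    exact TennAux.L_tree h01 h12 h23 h34

theorem TCond.ext'' {θ : Ordinal} {p q : TCond θ} (hx : p.x = q.x) (hl : p.lt = q.lt) :
    p = q := by
  cases p; cases q
  cases hx; cases hl
  rfl

/-- The incompatibility lemma, for `α < β`. -/
theorem tenn_incomp {θ : Ordinal} {α β : Ordinal}
    (hα : α < (Cardinal.aleph 1).ord) (hβ : β < (Cardinal.aleph 1).ord) (hab : α < β)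
    {p q : TCond θ}
    (hpx : p.x = {α, α + 1, α + 2, (Cardinal.aleph 1).ord, (Cardinal.aleph 1).ord + 1})
    (hplt : ∀ a b, p.lt a b ↔
      (a, b) ∈ TennAux.L α (α + 1) (α + 2) (Cardinal.aleph 1).ord ((Cardinal.aleph 1).ord + 1))
    (hqlt : ∀ a b, q.lt a b ↔
      (a, b) ∈ TennAux.L β (β + 1) (β + 2) (Cardinal.aleph 1).ord ((Cardinal.aleph 1).ord + 1)) :
    TIncomp p q := by
  obtain ⟨a01, a12, a23⟩ := tenn_chain hα
  obtain ⟨b01, b12, b23⟩ := tenn_chain hβ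
  have hs1 : α + 1 < β + 1 := by
    rw [Ordinal.add_one_eq_succ, Ordinal.add_one_eq_succ]
    exact Order.succ_lt_succ hab
  have hs2 : α + 2 < β + 2 := by
    have e1 : α + 2 = (α + 1) + 1 := by rw [add_assoc]; norm_num
    have e2 : β + 2 = (β + 1) + 1 := by rw [add_assoc]; norm_num
    rw [e1, e2, Ordinal.add_one_eq_succ, Ordinal.add_one_eq_succ]
    exact Order.succ_lt_succ hs1
  have hab' : α + 1 ≤ β := by
    rw [Ordinal.add_one_eq_succ, Order.succ_le_iff]; exact hab
  rintro ⟨r, ⟨hrpx, hrp⟩, ⟨hrqx, hrq⟩⟩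
  have rp : ∀ a b, (a, b) ∈ TennAux.L α (α + 1) (α + 2) (Cardinal.aleph 1).ord
      ((Cardinal.aleph 1).ord + 1) → r.lt a b :=
    fun a b h => ((hrp a b).mp ((hplt a b).mpr h)).1
  have rq : ∀ a b, (a, b) ∈ TennAux.L β (β + 1) (β + 2) (Cardinal.aleph 1).ord
      ((Cardinal.aleph 1).ord + 1) → r.lt a b :=
    fun a b h => ((hrq a b).mp ((hqlt a b).mpr h)).1
  have r1 : r.lt (α + 1) (Cardinal.aleph 1).ord := rp _ _ (by simp [TennAux.L])
  have r2 : r.lt (β + 1) (Cardinal.aleph 1).ord := rq _ _ (by simp [TennAux.L])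
  have hc : r.lt (α + 1) (β + 1) := by
    rcases r.lt_tree _ _ _ r1 r2 with h | h | h
    · exact absurd h hs1.ne
    · exact h
    · exact absurd (r.lt_ord _ _ h) (asymm hs1)
  have rq1 : r.lt β (β + 1) := rq _ _ (by simp [TennAux.L])
  have rqb2 : r.lt β (β + 2) := rq _ _ (by simp [TennAux.L])
  have h3 : r.lt (α + 1) (β + 2) := by
    rcases r.lt_tree _ _ _ hc rq1 with h | h | h
    · exact h ▸ rqb2
    · exact r.lt_trans _ _ _ h rqb2
    · exact absurd (r.lt_ord _ _ h) (not_lt.mpr hab')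
  have r3 : r.lt (α + 2) ((Cardinal.aleph 1).ord + 1) := rp _ _ (by simp [TennAux.L])
  have r4 : r.lt (β + 2) ((Cardinal.aleph 1).ord + 1) := rq _ _ (by simp [TennAux.L])
  have h4 : r.lt (α + 2) (β + 2) := by
    rcases r.lt_tree _ _ _ r3 r4 with h | h | h
    · exact absurd h hs2.ne
    · exact h
    · exact absurd (r.lt_ord _ _ h) (asymm hs2)
  rcases r.lt_tree _ _ _ h3 h4 with h5 | h5 | h5
  · exact absurd h5 a12.ne
  · -- r.lt (α+1) (α+2), so p.lt (α+1) (α+2), contradiction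
    have hp12 : p.lt (α + 1) (α + 2) := (hrp _ _).mpr ⟨h5, by simp [hpx], by simp [hpx]⟩
    have hm := (hplt _ _).mp hp12
    simp only [TennAux.L, List.mem_cons, Prod.mk.injEq, List.not_mem_nil, or_false] at hm
    rcases hm with ⟨h, _⟩|⟨_, h⟩|⟨h, _⟩|⟨h, _⟩|⟨h, _⟩|⟨h, _⟩
    · exact absurd h a01.ne'
    · exact absurd h a23.ne
    · exact absurd h a01.ne'
    · exact absurd h a01.ne'
    · exact absurd h a12.ne
    · exact absurd h a01.ne'
  · exact absurd (r.lt_ord _ _ h5) (asymm a12)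


universe u v

theorem tenn_w1_eq_lift : (Cardinal.aleph 1 : Cardinal.{u}).ord =
    Ordinal.lift.{u, 0} (Cardinal.aleph 1 : Cardinal.{0}).ord := by
  rw [Cardinal.lift_ord, Cardinal.lift_aleph, Ordinal.lift_one]

theorem tenn_exists_down {a : Ordinal.{u}} (ha : a < (Cardinal.aleph 1).ord) :
    ∃ a₀ : Ordinal.{0}, a₀ < (Cardinal.aleph 1).ord ∧ Ordinal.lift.{u, 0} a₀ = a := by
  rw [tenn_w1_eq_lift] at ha
  obtain ⟨a₀, h, rfl⟩ := Ordinal.lt_lift_iff.1 ha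
  exact ⟨a₀, h, rfl⟩

theorem tenn_lift_lt {a₀ : Ordinal.{0}} (h : a₀ < (Cardinal.aleph 1).ord) :
    Ordinal.lift.{u, 0} a₀ < (Cardinal.aleph 1 : Cardinal.{u}).ord := by
  rw [tenn_w1_eq_lift]
  exact Ordinal.lift_lt.2 h

theorem tenn_cond_congr {θ : Ordinal} (hθ : (Cardinal.aleph 1).ord + 1 < θ)
    {α β : Ordinal} (hα : α < (Cardinal.aleph 1).ord) (hβ : β < (Cardinal.aleph 1).ord)
    (h : α = β) : tenn_cond θ hθ α hα = tenn_cond θ hθ β hβ := by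
  subst h; rfl

theorem tenn_cond_inj {θ : Ordinal} (hθ : (Cardinal.aleph 1).ord + 1 < θ)
    {α β : Ordinal} (hα : α < (Cardinal.aleph 1).ord) (hβ : β < (Cardinal.aleph 1).ord)
    (h : tenn_cond θ hθ α hα = tenn_cond θ hθ β hβ) : α = β := by
  obtain ⟨a01, a12, a23⟩ := tenn_chain hα
  have a34 : (Cardinal.aleph 1).ord < (Cardinal.aleph 1).ord + 1 := by
    rw [Ordinal.add_one_eq_succ]; exact Order.lt_succ _
  have hl : (tenn_cond θ hθ α hα).lt α (α + 1) := by
    show (α, α + 1) ∈ TennAux.L α (α + 1) (α + 2) (Cardinal.aleph 1).ord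
      ((Cardinal.aleph 1).ord + 1)
    simp [TennAux.L]
  rw [h] at hl
  have hl' : (α, α + 1) ∈ TennAux.L β (β + 1) (β + 2) (Cardinal.aleph 1).ord
      ((Cardinal.aleph 1).ord + 1) := hl
  simp only [TennAux.L, List.mem_cons, Prod.mk.injEq, List.not_mem_nil, or_false] at hl'
  have hα1 : α + 1 < (Cardinal.aleph 1).ord := a12.trans a23
  rcases hl' with ⟨h1, _⟩|⟨_, h2⟩|⟨_, h2⟩|⟨h1, _⟩|⟨_, h2⟩|⟨_, h2⟩
  · exact h1
  · exact absurd h2 hα1.ne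
  · exact absurd h2 hα1.ne
  · exact h1
  · exact absurd h2 (hα1.trans a34).ne
  · exact absurd h2 (hα1.trans a34).ne

/-- The antichain set `A`. -/
def tennA (θ : Ordinal) : Set (TCond θ) :=
  {p : TCond θ | ∃ α < (Cardinal.aleph 1).ord,
    p.x = {α, α + 1, α + 2, (Cardinal.aleph 1).ord,
      (Cardinal.aleph 1).ord + 1} ∧
    ∀ a b, p.lt a b ↔
      ((a, b) ∈ ([(α, α + 1), (α + 1, (Cardinal.aleph 1).ord),
        (α, (Cardinal.aleph 1).ord), (α, α + 2),
        (α + 2, (Cardinal.aleph 1).ord + 1),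
        (α, (Cardinal.aleph 1).ord + 1)] : List (Ordinal × Ordinal)))}

theorem tenn_pairwise (θ : Ordinal) :
    Set.Pairwise (tennA θ) (fun p q => TIncomp p q) := by
  rintro p ⟨α, hα, hpx, hplt⟩ q ⟨β, hβ, hqx, hqlt⟩ hne
  rcases lt_trichotomy α β with h | rfl | h
  · exact tenn_incomp hα hβ h hpx hplt hqlt
  · exfalso
    apply hne
    refine TCond.ext'' (hpx.trans hqx.symm) ?_
    funext a b
    exact propext ((hplt a b).trans (hqlt a b).symm)
  · intro ⟨r, h1, h2⟩
    exact tenn_incomp hβ hα h hqx hqlt hplt ⟨r, h2, h1⟩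

theorem tenn_bij {θ : Ordinal.{u}} (hθ : (Cardinal.aleph 1).ord + 1 < θ) :
    ∃ f : Set.Iio (Cardinal.aleph 1 : Cardinal.{v}).ord → tennA θ,
      Function.Bijective f := by
  have hmem : ∀ (α : Ordinal.{u}) (hα : α < (Cardinal.aleph 1).ord),
      tenn_cond θ hθ α hα ∈ tennA θ := fun α hα => ⟨α, hα, rfl, fun _ _ => Iff.rfl⟩
  refine ⟨fun a => ⟨tenn_cond θ hθ (Ordinal.lift.{u, 0} (tenn_exists_down a.2).choose)
    (tenn_lift_lt (tenn_exists_down a.2).choose_spec.1), hmem _ _⟩, ?_, ?_⟩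
  · rintro a b h
    simp only [Subtype.mk.injEq] at h
    have h2 := tenn_cond_inj hθ _ _ h
    rw [Ordinal.lift_inj] at h2
    have ha := (tenn_exists_down a.2).choose_spec.2
    have hb := (tenn_exists_down b.2).choose_spec.2
    apply Subtype.ext
    rw [← ha, ← hb, h2]
  · rintro ⟨p, α, hα, hpx, hplt⟩
    obtain ⟨α₀, h0, hl0⟩ := tenn_exists_down hα
    refine ⟨⟨Ordinal.lift.{v, 0} α₀, tenn_lift_lt h0⟩, Subtype.ext ?_⟩
    have hc : (tenn_exists_down (tenn_lift_lt h0 :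
        Ordinal.lift.{v, 0} α₀ < (Cardinal.aleph 1 : Cardinal.{v}).ord)).choose = α₀ := by
      have := (tenn_exists_down (tenn_lift_lt h0 :
        Ordinal.lift.{v, 0} α₀ < (Cardinal.aleph 1 : Cardinal.{v}).ord)).choose_spec.2
      rwa [Ordinal.lift_inj] at this
    have heq : Ordinal.lift.{u, 0} (tenn_exists_down (tenn_lift_lt h0 :
        Ordinal.lift.{v, 0} α₀ < (Cardinal.aleph 1 : Cardinal.{v}).ord)).choose = α := by
      rw [hc, hl0]
    subst heq
    refine TCond.ext'' hpx.symm ?_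
    funext a b
    exact propext ((hplt a b).symm)

theorem tenn_third {θ : Ordinal.{u}} (hθ : (Cardinal.aleph 1).ord + 1 < θ) :
    ¬(∀ B : Set (TCond θ), B.Pairwise (fun p q => TIncomp p q) → B.Countable) := by
  intro hccc
  have hc : (tennA θ).Countable := hccc _ (tenn_pairwise θ)
  obtain ⟨f, hfinj, -⟩ := tenn_bij.{u, u} hθ
  haveI := hc.to_subtype
  haveI : Countable (Set.Iio (Cardinal.aleph 1 : Cardinal.{u}).ord) := hfinj.countable
  have hmk : Cardinal.mk (Set.Iio (Cardinal.aleph 1 : Cardinal.{u}).ord) ≤ Cardinal.aleph0 :=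
    Cardinal.mk_le_aleph0_iff.mpr this
  rw [Ordinal.mk_Iio_ordinal, Cardinal.card_ord, Cardinal.lift_le_aleph0] at hmk
  exact absurd hmk (not_le.mpr Cardinal.aleph0_lt_aleph_one)

/-- For `θ > ω₁ + 1`, the set
`A = {p : x_p = {α, α+1, α+2, ω₁, ω₁+1}, α <_p α+1 <_p ω₁,
α <_p α+2 <_p ω₁+1, α+1 ≁_p α+2}` is an antichain in `P(θ)` of size `ω₁`;
in particular `P(θ)` does not satisfy the countable chain condition. -/
theorem tennenbaum_not_ccc {θ : Ordinal}
    (hθ : (Cardinal.aleph 1).ord + 1 < θ) :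
    Set.Pairwise
      {p : TCond θ | ∃ α < (Cardinal.aleph 1).ord,
        p.x = {α, α + 1, α + 2, (Cardinal.aleph 1).ord,
          (Cardinal.aleph 1).ord + 1} ∧
        ∀ a b, p.lt a b ↔
          ((a, b) ∈ ([(α, α + 1), (α + 1, (Cardinal.aleph 1).ord),
            (α, (Cardinal.aleph 1).ord), (α, α + 2),
            (α + 2, (Cardinal.aleph 1).ord + 1),
            (α, (Cardinal.aleph 1).ord + 1)] : List (Ordinal × Ordinal)))}
      (fun p q => TIncomp p q) ∧
    (∃ f : Set.Iio (Cardinal.aleph 1).ord →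
      {p : TCond θ | ∃ α < (Cardinal.aleph 1).ord,
        p.x = {α, α + 1, α + 2, (Cardinal.aleph 1).ord,
          (Cardinal.aleph 1).ord + 1} ∧
        ∀ a b, p.lt a b ↔
          ((a, b) ∈ ([(α, α + 1), (α + 1, (Cardinal.aleph 1).ord),
            (α, (Cardinal.aleph 1).ord), (α, α + 2),
            (α + 2, (Cardinal.aleph 1).ord + 1),
            (α, (Cardinal.aleph 1).ord + 1)] : List (Ordinal × Ordinal)))},
      Function.Bijective f) ∧
    ¬(∀ B : Set (TCond θ), B.Pairwise (fun p q => TIncomp p q) → B.Countable) := by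
  exact ⟨tenn_pairwise θ, tenn_bij hθ, tenn_third hθ⟩
end

section
/- Let π : θ̄ → θ be an order-preserving injection and let π : P(θ̄) → P(θ) be the induced map on Tennenbaum conditions, ⟨x_p, <_p⟩ ↦ ⟨π[x_p], π[<_p]⟩. Then the induced map is an injective embedding of partial orders: it is order-preserving, and p, p' ∈ P(θ̄) are incompatible iff π(p), π(p') are incompatible in P(θ). -/
open Ordinal

/-- `TImage π p P` says that `P = π(p)` is the image of the condition `p`
under the induced action of `π` on conditions. -/
def TImage {θ θbar : Ordinal} (π : Ordinal → Ordinal)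
    (p : TCond θbar) (P : TCond θ) : Prop :=
  (∀ b, b ∈ P.x ↔ ∃ a ∈ p.x, π a = b) ∧
  (∀ b b', P.lt b b' ↔ ∃ a a', p.lt a a' ∧ π a = b ∧ π a' = b')

/-- For an order-preserving `π : θ̄ → θ`, the induced map
`P(θ̄) → P(θ)`, `⟨x_p, <_p⟩ ↦ ⟨π[x_p], π[<_p]⟩`, is a well-defined injective
embedding of partial orders: it is order-preserving, and `p, p'` are
incompatible iff their images are incompatible. -/
theorem tennenbaum_induced_embedding {θ θbar : Ordinal} (π : Ordinal → Ordinal)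
    (hmono : StrictMonoOn π (Set.Iio θbar)) (hmaps : ∀ ξ < θbar, π ξ < θ) :
    (∀ p : TCond θbar, ∃ P : TCond θ, TImage π p P) ∧
    (∀ (p q : TCond θbar) (P Q : TCond θ), TImage π p P → TImage π q Q →
      (TExt p q → TExt P Q) ∧ (TIncomp p q ↔ TIncomp P Q) ∧ (P = Q → p = q)) := by
  have hinj : ∀ a b, a < θbar → b < θbar → π a = π b → a = b := fun a b ha hb h =>
    hmono.injOn (Set.mem_Iio.mpr ha) (Set.mem_Iio.mpr hb) h
  have hlt : ∀ a b, a < θbar → b < θbar → a < b → π a < π b := fun a b ha hb h =>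
    hmono (Set.mem_Iio.mpr ha) (Set.mem_Iio.mpr hb) h
  have hltrev : ∀ a b, a < θbar → b < θbar → π a < π b → a < b := fun a b ha hb h =>
    (hmono.lt_iff_lt (Set.mem_Iio.mpr ha) (Set.mem_Iio.mpr hb)).mp h
  -- existence of images
  have exists_image : ∀ p : TCond θbar, ∃ P : TCond θ, TImage π p P := by
    intro p
    refine ⟨⟨p.x.image π, fun b b' => ∃ a a', p.lt a a' ∧ π a = b ∧ π a' = b',
      ?_, ?_, ?_, ?_, ?_⟩, ?_, ?_⟩
    · intro b hb
      rcases Finset.mem_image.mp hb with ⟨a, ha, rfl⟩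
      exact hmaps a (p.mem_lt a ha)
    · rintro b b' ⟨a, a', h, rfl, rfl⟩
      exact ⟨Finset.mem_image_of_mem π (p.lt_mem a a' h).1,
        Finset.mem_image_of_mem π (p.lt_mem a a' h).2⟩
    · rintro b b' ⟨a, a', h, rfl, rfl⟩
      exact hlt a a' (p.mem_lt a (p.lt_mem a a' h).1) (p.mem_lt a' (p.lt_mem a a' h).2)
        (p.lt_ord a a' h)
    · rintro b b' b'' ⟨a, a', h, rfl, rfl⟩ ⟨c, c', h2, hc, rfl⟩
      have : c = a' := hinj c a' (p.mem_lt c (p.lt_mem c c' h2).1)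
        (p.mem_lt a' (p.lt_mem a a' h).2) hc
      subst this
      exact ⟨a, c', p.lt_trans a c c' h h2, rfl, rfl⟩
    · rintro b b' b'' ⟨a, a', h, rfl, rfl⟩ ⟨c, c', h2, rfl, hc⟩
      have : c' = a' := hinj c' a' (p.mem_lt c' (p.lt_mem c c' h2).2)
        (p.mem_lt a' (p.lt_mem a a' h).2) hc
      subst this
      rcases p.lt_tree a c c' h h2 with h3 | h3 | h3
      · exact Or.inl (congrArg π h3)
      · exact Or.inr (Or.inl ⟨a, c, h3, rfl, rfl⟩)
      · exact Or.inr (Or.inr ⟨c, a, h3, rfl, rfl⟩)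
    · intro b
      exact Finset.mem_image (f := π) (s := p.x) (b := b)
    · intro b b'; exact Iff.rfl
  -- order preservation
  have ext_image : ∀ (p q : TCond θbar) (P Q : TCond θ), TImage π p P → TImage π q Q →
      TExt p q → TExt P Q := by
    intro p q P Q hP hQ hpq
    constructor
    · intro b hb
      rcases (hQ.1 b).mp hb with ⟨a, ha, rfl⟩
      exact (hP.1 _).mpr ⟨a, hpq.1 ha, rfl⟩
    · intro b b'
      constructor
      · intro h
        rcases (hQ.2 b b').mp h with ⟨a, a', h2, rfl, rfl⟩
        have h' := (hpq.2 a a').mp h2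
        exact ⟨(hP.2 _ _).mpr ⟨a, a', h'.1, rfl, rfl⟩,
          (hQ.1 _).mpr ⟨a, h'.2.1, rfl⟩, (hQ.1 _).mpr ⟨a', h'.2.2, rfl⟩⟩
      · rintro ⟨hPlt, hb, hb'⟩
        rcases (hP.2 b b').mp hPlt with ⟨a, a', h, rfl, rfl⟩
        rcases (hQ.1 _).mp hb with ⟨c, hc, hcb⟩
        rcases (hQ.1 _).mp hb' with ⟨c', hc', hcb'⟩
        have e : c = a := hinj c a (q.mem_lt c hc) (p.mem_lt a (p.lt_mem a a' h).1) hcb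
        have e' : c' = a' := hinj c' a' (q.mem_lt c' hc')
          (p.mem_lt a' (p.lt_mem a a' h).2) hcb'
        subst e; subst e'
        exact (hQ.2 _ _).mpr ⟨c, c', (hpq.2 c c').mpr ⟨h, hc, hc'⟩, rfl, rfl⟩
  refine ⟨exists_image, fun p q P Q hP hQ => ⟨ext_image p q P Q hP hQ, ?_, ?_⟩⟩
  · -- incompatibility iff
    constructor
    · -- TIncomp p q → TIncomp P Q
      rintro hinc ⟨R, hRP, hRQ⟩
      apply hinc
      have memθ : ∀ a ∈ p.x ∪ q.x, a < θbar := by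
        intro a ha
        rcases Finset.mem_union.mp ha with h | h
        exacts [p.mem_lt a h, q.mem_lt a h]
      have hr2 : ∀ a b, (a ∈ p.x ∪ q.x ∧ b ∈ p.x ∪ q.x ∧ R.lt (π a) (π b)) →
          a ∈ p.x ∪ q.x ∧ b ∈ p.x ∪ q.x := by
        rintro a b ⟨ha, hb, _⟩; exact ⟨ha, hb⟩
      have hr3 : ∀ a b, (a ∈ p.x ∪ q.x ∧ b ∈ p.x ∪ q.x ∧ R.lt (π a) (π b)) → a < b := by
        rintro a b ⟨ha, hb, h⟩
        exact hltrev a b (memθ a ha) (memθ b hb) (R.lt_ord _ _ h)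
      have hr4 : ∀ a b c, (a ∈ p.x ∪ q.x ∧ b ∈ p.x ∪ q.x ∧ R.lt (π a) (π b)) →
          (b ∈ p.x ∪ q.x ∧ c ∈ p.x ∪ q.x ∧ R.lt (π b) (π c)) →
          (a ∈ p.x ∪ q.x ∧ c ∈ p.x ∪ q.x ∧ R.lt (π a) (π c)) := by
        rintro a b c ⟨ha, hb, h⟩ ⟨_, hc, h2⟩
        exact ⟨ha, hc, R.lt_trans _ _ _ h h2⟩
      have hr5 : ∀ a b c, (a ∈ p.x ∪ q.x ∧ c ∈ p.x ∪ q.x ∧ R.lt (π a) (π c)) →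
          (b ∈ p.x ∪ q.x ∧ c ∈ p.x ∪ q.x ∧ R.lt (π b) (π c)) →
          a = b ∨ (a ∈ p.x ∪ q.x ∧ b ∈ p.x ∪ q.x ∧ R.lt (π a) (π b)) ∨
            (b ∈ p.x ∪ q.x ∧ a ∈ p.x ∪ q.x ∧ R.lt (π b) (π a)) := by
        rintro a b c ⟨ha, hc, h⟩ ⟨hb, _, h2⟩
        rcases R.lt_tree (π a) (π b) (π c) h h2 with h3 | h3 | h3
        · exact Or.inl (hinj a b (memθ a ha) (memθ b hb) h3)
        · exact Or.inr (Or.inl ⟨ha, hb, h3⟩)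
        · exact Or.inr (Or.inr ⟨hb, ha, h3⟩)
      set r : TCond θbar :=
        ⟨p.x ∪ q.x, fun a b => a ∈ p.x ∪ q.x ∧ b ∈ p.x ∪ q.x ∧ R.lt (π a) (π b),
          memθ, hr2, hr3, hr4, hr5⟩ with hr
      have key : ∀ (s : TCond θbar) (S : TCond θ), TImage π s S → TExt R S →
          s.x ⊆ p.x ∪ q.x → TExt r s := by
        intro s S hS hRS hsub
        refine ⟨hsub, fun a b => ⟨?_, ?_⟩⟩
        · intro h
          have ha := (s.lt_mem a b h).1
          have hb := (s.lt_mem a b h).2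
          have hSlt : S.lt (π a) (π b) := (hS.2 _ _).mpr ⟨a, b, h, rfl, rfl⟩
          exact ⟨⟨hsub ha, hsub hb, ((hRS.2 _ _).mp hSlt).1⟩, ha, hb⟩
        · rintro ⟨⟨_, _, hRab⟩, ha, hb⟩
          have hSlt : S.lt (π a) (π b) := (hRS.2 _ _).mpr
            ⟨hRab, (hS.1 _).mpr ⟨a, ha, rfl⟩, (hS.1 _).mpr ⟨b, hb, rfl⟩⟩
          rcases (hS.2 _ _).mp hSlt with ⟨c, c', h, hc, hc'⟩
          have e : c = a := hinj c a (s.mem_lt c (s.lt_mem c c' h).1) (s.mem_lt a ha) hc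
          have e' : c' = b := hinj c' b (s.mem_lt c' (s.lt_mem c c' h).2)
            (s.mem_lt b hb) hc'
          subst e; subst e'
          exact h
      exact ⟨r, key p P hP hRP Finset.subset_union_left,
        key q Q hQ hRQ Finset.subset_union_right⟩
    · -- TIncomp P Q → TIncomp p q
      rintro hinc ⟨r, hrp, hrq⟩
      apply hinc
      rcases exists_image r with ⟨R, hR⟩
      exact ⟨R, ext_image r p R P hR hP hrp, ext_image r q R Q hR hQ hrq⟩
  · -- injectivity
    intro hPQ
    subst hPQ
    have hx : p.x = q.x := by
      ext a
      constructor
      · intro ha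
        rcases (hQ.1 (π a)).mp ((hP.1 (π a)).mpr ⟨a, ha, rfl⟩) with ⟨c, hc, hca⟩
        have : c = a := hinj c a (q.mem_lt c hc) (p.mem_lt a ha) hca
        subst this; exact hc
      · intro ha
        rcases (hP.1 (π a)).mp ((hQ.1 (π a)).mpr ⟨a, ha, rfl⟩) with ⟨c, hc, hca⟩
        have : c = a := hinj c a (p.mem_lt c hc) (q.mem_lt a ha) hca
        subst this; exact hc
    have hl : p.lt = q.lt := by
      funext a b
      apply propext
      constructor
      · intro h
        have ha := p.mem_lt a (p.lt_mem a b h).1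
        have hb := p.mem_lt b (p.lt_mem a b h).2
        rcases (hQ.2 (π a) (π b)).mp ((hP.2 _ _).mpr ⟨a, b, h, rfl, rfl⟩) with
          ⟨c, c', h2, hc, hc'⟩
        have e : c = a := hinj c a (q.mem_lt c (q.lt_mem c c' h2).1) ha hc
        have e' : c' = b := hinj c' b (q.mem_lt c' (q.lt_mem c c' h2).2) hb hc'
        subst e; subst e'; exact h2
      · intro h
        have ha := q.mem_lt a (q.lt_mem a b h).1
        have hb := q.mem_lt b (q.lt_mem a b h).2
        rcases (hP.2 (π a) (π b)).mp ((hQ.2 _ _).mpr ⟨a, b, h, rfl, rfl⟩) with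
          ⟨c, c', h2, hc, hc'⟩
        have e : c = a := hinj c a (p.mem_lt c (p.lt_mem c c' h2).1) ha hc
        have e' : c' = b := hinj c' b (p.mem_lt c' (p.lt_mem c c' h2).2) hb hc'
        subst e; subst e'; exact h2
    obtain ⟨px, plt, _, _, _, _, _⟩ := p
    obtain ⟨qx, qlt, _, _, _, _, _⟩ := q
    dsimp at hx hl
    subst hx; subst hl
    rfl
end
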